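/- arXiv:0910.4515 — 3 statements merged into one kernel-verified Lean document; each statement's English description precedes it below -/
import Mathlib

section
/- Let p = 2, let n ≥ 1, let 0 ≤ k ≤ ⌊n/2⌋ and k ≤ i, j ≤ n−k, and let λ = (n−k, k). Let t_{k,i} denote the semistandard tableau of shape λ with entries in {1,2} whose second row consists of k entries equal to 2 and whose first row has its last i−k entries equal to 2 and all other entries equal to 1. Then ⟨e_{t_{k,i}}, e_{t_{k,j}}⟩ = δ_{i,j} · 2^k · C(n−2k, i−k). -/
open scoped Classical
open Matrix

noncomputable section

/-- `D(a,b) ∈ ℕ^{p×p}`: `D(a,b)_{i,j}` counts positions `k` with `a_k = i` and `b_k = j`. -/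
def Dmat {n p : ℕ} (a b : Fin n → Fin p) : Matrix (Fin p) (Fin p) ℕ :=
  Matrix.of fun i j => (Finset.univ.filter fun k => a k = i ∧ b k = j).card

/-- The 0/1 matrix `A_D` with `(A_D)_{a,b} = 1` iff `D(a,b) = D`. -/
def AD (n p : ℕ) (D : Matrix (Fin p) (Fin p) ℕ) :
    Matrix (Fin n → Fin p) (Fin n → Fin p) ℂ :=
  Matrix.of fun a b => if Dmat a b = D then 1 else 0

/-- Row (0-indexed) of the `k`-th box (0-indexed, row-major numbering) of the Ferrers
diagram of `lam`: the number of indices `i` with `λ_0 + ⋯ + λ_i ≤ k`. -/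
def rowOf (p : ℕ) (lam : Fin p → ℕ) (k : ℕ) : ℕ :=
  (Finset.univ.filter fun i : Fin p => (∑ j ∈ Finset.univ.filter (· ≤ i), lam j) ≤ k).card

/-- Column (0-indexed) of the `k`-th box of the Ferrers diagram of `lam`. -/
def colOf (p : ℕ) (lam : Fin p → ℕ) (k : ℕ) : ℕ :=
  k - ∑ j ∈ Finset.univ.filter (fun j : Fin p => (j : ℕ) < rowOf p lam k), lam j

/-- The column group `C_λ`: permutations of the boxes mapping every box to a box
in the same column. -/
def colGroup (n p : ℕ) (lam : Fin p → ℕ) : Finset (Equiv.Perm (Fin n)) :=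
  Finset.univ.filter fun σ => ∀ k : Fin n, colOf p lam (σ k : ℕ) = colOf p lam (k : ℕ)

/-- The row group `R_λ`: permutations of the boxes mapping every box to a box
in the same row. -/
def rowGroup (n p : ℕ) (lam : Fin p → ℕ) : Finset (Equiv.Perm (Fin n)) :=
  Finset.univ.filter fun σ => ∀ k : Fin n, rowOf p lam (σ k : ℕ) = rowOf p lam (k : ℕ)

/-- The vector `e_t = Σ_{σ ∈ C_λ} sgn(σ) Σ_{t' ∼ t} χ^{σ t'} ∈ ℂ^{[p]^n}`, where `t' ∼ t`
means `t' = π t` for some `π ∈ R_λ`, and `(σ t)(k) = t(σ⁻¹ k)`. -/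
noncomputable def eT (n p : ℕ) (lam : Fin p → ℕ) (t : Fin n → Fin p) :
    (Fin n → Fin p) → ℂ :=
  ∑ σ ∈ colGroup n p lam, ((Equiv.Perm.sign σ : ℤ) : ℂ) •
    ∑ t' ∈ Finset.univ.filter (fun t' : Fin n → Fin p =>
        ∃ π ∈ rowGroup n p lam, t' = fun k => t (π⁻¹ k)),
      (Pi.single (fun k => t' (σ⁻¹ k)) (1 : ℂ) : (Fin n → Fin p) → ℂ)

/-- The tableau `t_λ` whose entries in row `i` all equal `i`. -/
def tLam (n p : ℕ) (hp : 0 < p) (lam : Fin p → ℕ) : Fin n → Fin p :=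
  fun k => ⟨rowOf p lam (k : ℕ) % p, Nat.mod_lt _ hp⟩

/-- The vector `e_λ := e_{t_λ}`. -/
noncomputable def eLam (n p : ℕ) (hp : 0 < p) (lam : Fin p → ℕ) : (Fin n → Fin p) → ℂ :=
  eT n p lam (tLam n p hp lam)

/-- The standard inner product `⟨x,y⟩ = Σ_a x_a conj(y_a)` on `ℂ^{[2]^n}`. -/
noncomputable def sinner {n p : ℕ} (x y : (Fin n → Fin p) → ℂ) : ℂ :=
  ∑ a, x a * (starRingEnd ℂ) (y a)

/-- The semistandard tableau `t_{k,i}` of shape `(n-k, k)` (identified with a word in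
`[2]^n` via row-major numbering of the boxes: boxes `0,…,n-k-1` form the first row and
boxes `n-k,…,n-1` the second row): the second row consists of `k` entries `2`, the first
row has its last `i-k` entries equal to `2` and all other entries equal to `1` (the
symbols `1, 2` being the elements `0, 1` of `Fin 2`); thus box `b` carries the symbol
`2` iff `b ≥ n - i`. -/
def tki (n i : ℕ) : Fin n → Fin 2 :=
  fun b => if (b : ℕ) < n - i then 0 else 1


namespace S13

lemma rowOf_two (n k b : ℕ) (hb : b < n) (hkn : k ≤ n) :
    rowOf 2 ![n - k, k] b = if b < n - k then 0 else 1 := by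
  have h0 : (Finset.univ.filter (· ≤ (0 : Fin 2))) = {0} := by decide
  have h1 : (Finset.univ.filter (· ≤ (1 : Fin 2))) = Finset.univ := by decide
  unfold rowOf
  rw [Finset.card_filter, Fin.sum_univ_two, h0, h1, Finset.sum_singleton, Fin.sum_univ_two]
  simp only [Matrix.cons_val_zero, Matrix.cons_val_one, Matrix.head_cons]
  by_cases h1 : n - k ≤ b <;> by_cases h2 : n - k + k ≤ b <;> simp only [h1, h2, ↓reduceIte] <;> split_ifs <;> omega

lemma colOf_two (n k b : ℕ) (hb : b < n) (hkn : k ≤ n) :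
    colOf 2 ![n - k, k] b = if b < n - k then b else b - (n - k) := by
  unfold colOf
  rw [rowOf_two n k b hb hkn]
  by_cases h : b < n - k
  · simp only [if_pos h]
    have : (Finset.univ.filter (fun j : Fin 2 => (j : ℕ) < 0)) = ∅ := by decide
    simp [this]
  · simp only [if_neg h]
    have : (Finset.univ.filter (fun j : Fin 2 => (j : ℕ) < 1)) = {0} := by decide
    rw [this, Finset.sum_singleton]
    simp

lemma card_filter_interval (n lo hi : ℕ) (hhi : hi ≤ n) :
    (Finset.univ.filter fun b : Fin n => lo ≤ (b : ℕ) ∧ (b : ℕ) < hi).card = hi - lo := by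
  rw [← Nat.card_Ico lo hi]
  refine Finset.card_bij' (fun b _ => (b : ℕ)) (fun x hx => (⟨x, by
    simp only [Finset.mem_Ico] at hx; omega⟩ : Fin n)) ?_ ?_ ?_ ?_
  · intro a ha; simp only [Finset.mem_filter] at ha; simp [Finset.mem_Ico]; omega
  · intro x hx; simp only [Finset.mem_Ico] at hx; simp; omega
  · intro a ha; rfl
  · intro x hx; rfl

/-- Generic: equal-card finsets are related by a permutation. -/
lemma exists_perm_core {α : Type*} [Fintype α] [DecidableEq α] (s u : Finset α)
    (h : s.card = u.card) : ∃ ρ : Equiv.Perm α, ∀ x, ρ x ∈ s ↔ x ∈ u := by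
  have e1 : {x // x ∈ u} ≃ {x // x ∈ s} :=
    Fintype.equivOfCardEq (by rw [Fintype.card_coe, Fintype.card_coe, h])
  have e2 : {x // ¬ x ∈ u} ≃ {x // ¬ x ∈ s} := by
    apply Fintype.equivOfCardEq
    rw [Fintype.card_subtype_compl, Fintype.card_subtype_compl]
    congr 1
    rw [Fintype.card_coe, Fintype.card_coe, h]
  refine ⟨(Equiv.sumCompl (· ∈ u)).symm.trans ((e1.sumCongr e2).trans
    (Equiv.sumCompl (· ∈ s))), fun x => ?_⟩
  by_cases hx : x ∈ u
  · simp only [Equiv.trans_apply, Equiv.sumCompl_symm_apply_of_pos hx,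
      Equiv.sumCongr_apply, Sum.map_inl, Equiv.sumCompl_apply_inl]
    exact ⟨fun _ => hx, fun _ => (e1 ⟨x, hx⟩).2⟩
  · simp only [Equiv.trans_apply, Equiv.sumCompl_symm_apply_of_neg hx,
      Equiv.sumCongr_apply, Sum.map_inr, Equiv.sumCompl_apply_inr]
    exact ⟨fun h' => absurd h' (e2 ⟨x, hx⟩).2, fun h' => absurd h' hx⟩

/-- Version respecting a predicate `p`, identity outside `p`. -/
lemma exists_perm_pred {α : Type*} [Fintype α] [DecidableEq α] (p : α → Prop)
    [DecidablePred p] (s u : Finset α) (hs : ∀ x ∈ s, p x) (hu : ∀ x ∈ u, p x)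
    (h : s.card = u.card) :
    ∃ ρ : Equiv.Perm α, (∀ x, p (ρ x) ↔ p x) ∧ (∀ x, ρ x ∈ s ↔ x ∈ u) := by
  obtain ⟨ρ₀, hρ₀⟩ := exists_perm_core (s.subtype p) (u.subtype p) (by
    rw [Finset.card_subtype, Finset.card_subtype, Finset.filter_true_of_mem hs,
      Finset.filter_true_of_mem hu, h])
  refine ⟨Equiv.Perm.ofSubtype ρ₀, fun x => ?_, fun x => ?_⟩
  · by_cases hx : p x
    · rw [Equiv.Perm.ofSubtype_apply_of_mem ρ₀ hx]
      exact ⟨fun _ => hx, fun _ => (ρ₀ ⟨x, hx⟩).2⟩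
    · rw [Equiv.Perm.ofSubtype_apply_of_not_mem ρ₀ hx]
  · by_cases hx : p x
    · rw [Equiv.Perm.ofSubtype_apply_of_mem ρ₀ hx]
      have := hρ₀ ⟨x, hx⟩
      simp only [Finset.mem_subtype] at this
      exact this
    · rw [Equiv.Perm.ofSubtype_apply_of_not_mem ρ₀ hx]
      exact ⟨fun h' => absurd (hs x h') hx, fun h' => absurd (hu x h') hx⟩


lemma fin2_eq_of_iff : ∀ x y : Fin 2, (x = 1 ↔ y = 1) → x = y := by decide

lemma tki_eq_one_iff (n i : ℕ) (hi : i ≤ n) (b : Fin n) : tki n i b = 1 ↔ n - i ≤ (b : ℕ) := by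
  unfold tki
  by_cases h : (b : ℕ) < n - i
  · rw [if_pos h]
    exact iff_of_false (by decide) (by omega)
  · rw [if_neg h]
    exact iff_of_true rfl (by omega)

lemma card_tki (n k i : ℕ) (hkk : k + k ≤ n) (hki : k ≤ i) (hin : i ≤ n - k) :
    (Finset.univ.filter fun b : Fin n => (b : ℕ) < n - k ∧ tki n i b = 1).card = i - k := by
  have : (Finset.univ.filter fun b : Fin n => (b : ℕ) < n - k ∧ tki n i b = 1)
      = (Finset.univ.filter fun b : Fin n => n - i ≤ (b : ℕ) ∧ (b : ℕ) < n - k) := by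
    apply Finset.filter_congr
    intro b _
    rw [tki_eq_one_iff n i (by omega)]
    constructor <;> exact fun h => ⟨h.2, h.1⟩
  rw [this, card_filter_interval n (n - i) (n - k) (by omega)]
  omega

lemma mem_orbit_iff (n k i : ℕ) (hkk : k + k ≤ n) (hki : k ≤ i) (hin : i ≤ n - k)
    (t' : Fin n → Fin 2) :
    (∃ π ∈ rowGroup n 2 ![n - k, k], t' = fun x => tki n i (π⁻¹ x)) ↔
      ((∀ b : Fin n, n - k ≤ (b : ℕ) → t' b = 1) ∧
        (Finset.univ.filter fun b : Fin n => (b : ℕ) < n - k ∧ t' b = 1).card = i - k) := by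
  have hkn : k ≤ n := by omega
  have hrowf : ∀ x : Fin n, rowOf 2 ![n - k, k] (x : ℕ) = if (x : ℕ) < n - k then 0 else 1 :=
    fun x => rowOf_two n k x x.2 hkn
  constructor
  · rintro ⟨π, hπ, rfl⟩
    have hrow : ∀ x : Fin n, rowOf 2 ![n - k, k] ((π x : Fin n) : ℕ) = rowOf 2 ![n - k, k] (x : ℕ) :=
      (Finset.mem_filter.1 hπ).2
    have hlt : ∀ x : Fin n, ((π⁻¹ x : Fin n) : ℕ) < n - k ↔ (x : ℕ) < n - k := by
      intro x
      have := hrow (π⁻¹ x)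
      rw [show π (π⁻¹ x) = x from (Equiv.eq_symm_apply π).mp rfl] at this
      rw [hrowf, hrowf] at this
      constructor
      · intro h; by_contra hcon
        rw [if_pos h, if_neg hcon] at this; omega
      · intro h; by_contra hcon
        rw [if_neg hcon, if_pos h] at this; omega
    constructor
    · intro b hb
      rw [tki_eq_one_iff n i (by omega)]
      have := (hlt b).not.2 (by omega)
      omega
    · rw [← card_tki n k i hkk hki hin]
      apply Finset.card_bij' (fun b _ => π⁻¹ b) (fun b _ => π b)
      · intro b hb
        simp only [Finset.mem_filter, Finset.mem_univ, true_and] at hb ⊢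
        exact ⟨(hlt b).2 hb.1, hb.2⟩
      · intro b hb
        simp only [Finset.mem_filter, Finset.mem_univ, true_and] at hb ⊢
        refine ⟨?_, ?_⟩
        · have := hlt (π b); rw [show π⁻¹ (π b) = b from Equiv.Perm.inv_eq_iff_eq.mpr rfl] at this; exact this.1 hb.1
        · have h2 := hb.2
          simpa using h2
      · intro b _; simp
      · intro b _; simp
  · rintro ⟨h1, h2⟩
    obtain ⟨ρ, hp, hmem⟩ := exists_perm_pred (fun x : Fin n => (x : ℕ) < n - k)
      (Finset.univ.filter fun b : Fin n => (b : ℕ) < n - k ∧ tki n i b = 1)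
      (Finset.univ.filter fun b : Fin n => (b : ℕ) < n - k ∧ t' b = 1)
      (fun x hx => (Finset.mem_filter.1 hx).2.1) (fun x hx => (Finset.mem_filter.1 hx).2.1)
      (by rw [card_tki n k i hkk hki hin, h2])
    refine ⟨ρ⁻¹, ?_, ?_⟩
    · rw [rowGroup, Finset.mem_filter]
      refine ⟨Finset.mem_univ _, fun x => ?_⟩
      rw [hrowf, hrowf]
      have := hp (ρ⁻¹ x)
      rw [show ρ (ρ⁻¹ x) = x from (Equiv.eq_symm_apply ρ).mp rfl] at this
      rcases lt_or_ge (x : ℕ) (n - k) with h | h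
      · rw [if_pos (this.1 h), if_pos h]
      · rw [if_neg (by intro hcon; have := this.2 hcon; omega), if_neg (by omega)]
    · funext b
      rw [inv_inv]
      apply fin2_eq_of_iff
      rcases lt_or_ge (b : ℕ) (n - k) with hb | hb
      · have hρb : ((ρ b : Fin n) : ℕ) < n - k := (hp b).2 hb
        have hm := hmem b
        simp only [Finset.mem_filter, Finset.mem_univ, true_and] at hm
        constructor
        · intro ht'
          exact (hm.2 ⟨hb, ht'⟩).2
        · intro htk
          exact (hm.1 ⟨hρb, htk⟩).2
      · have hρb : n - k ≤ ((ρ b : Fin n) : ℕ) := by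
          have := (hp b).not.2 (by omega); omega
        constructor
        · intro _; rw [tki_eq_one_iff n i (by omega)]; omega
        · intro _; exact h1 b hb
  

/-- the inverse map for the support count -/
def psi' {n k : ℕ} (g : Fin k → Fin 2) (T : Finset (Fin n)) : Fin n → Fin 2 :=
  fun b => if h1 : (b : ℕ) < k then g ⟨b.1, h1⟩
    else if h2 : (b : ℕ) < n - k then (if b ∈ T then 1 else 0)
    else (if g ⟨b.1 - (n - k), by have := b.2; omega⟩ = 1 then 0 else 1)


section NK
variable (n k : ℕ) (hkk : k + k ≤ n)

def bx0 (c : Fin k) : Fin n := ⟨c.1, by have := c.2; omega⟩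
def bx1 (c : Fin k) : Fin n := ⟨c.1 + (n - k), by have := c.2; omega⟩

variable {n k}

@[simp] lemma bx0_val (c : Fin k) : (bx0 n k hkk c).1 = c.1 := rfl
@[simp] lemma bx1_val (c : Fin k) : (bx1 n k hkk c).1 = c.1 + (n - k) := rfl

lemma bx0_inj {c c' : Fin k} (h : bx0 n k hkk c = bx0 n k hkk c') : c = c' :=
  Fin.ext (by have := congrArg Fin.val h; simpa using this)

lemma bx1_inj {c c' : Fin k} (h : bx1 n k hkk c = bx1 n k hkk c') : c = c' := by
  have := congrArg Fin.val h
  simp only [bx1_val] at this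
  exact Fin.ext (by omega)

lemma bx0_ne_bx1 (c c' : Fin k) : bx0 n k hkk c ≠ bx1 n k hkk c' := by
  intro h
  have := congrArg Fin.val h
  simp only [bx0_val, bx1_val] at this
  have := c.2; have := c'.2; omega

def sw (c : Fin k) : Equiv.Perm (Fin n) := Equiv.swap (bx0 n k hkk c) (bx1 n k hkk c)

lemma sw_apply_ne (c : Fin k) (b : Fin n) (h0 : b ≠ bx0 n k hkk c)
    (h1 : b ≠ bx1 n k hkk c) : sw hkk c b = b :=
  Equiv.swap_apply_of_ne_of_ne h0 h1

lemma sw_comm (c c' : Fin k) (h : c ≠ c') : Commute (sw hkk c) (sw hkk c') := by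
  apply Equiv.Perm.Disjoint.commute
  intro x
  by_cases hx : x = bx0 n k hkk c ∨ x = bx1 n k hkk c
  · right
    apply sw_apply_ne
    · rcases hx with hx | hx <;> subst hx
      · exact fun hh => h (bx0_inj hkk hh)
      · exact fun hh => bx0_ne_bx1 hkk c' c hh.symm
    · rcases hx with hx | hx <;> subst hx
      · exact bx0_ne_bx1 hkk c c'
      · exact fun hh => h (bx1_inj hkk hh)
  · left
    push_neg at hx
    exact sw_apply_ne hkk c x hx.1 hx.2

def fS (S : Finset (Fin k)) : Equiv.Perm (Fin n) :=
  S.noncommProd (sw hkk) (fun c _ c' _ h => sw_comm hkk c c' h)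

lemma fS_empty : fS hkk (∅ : Finset (Fin k)) = 1 := Finset.noncommProd_empty _ _

lemma fS_insert (a : Fin k) (S : Finset (Fin k)) (ha : a ∉ S) :
    fS hkk (insert a S) = sw hkk a * fS hkk S :=
  Finset.noncommProd_insert_of_notMem _ _ _ _ ha

lemma fS_apply_notin (S : Finset (Fin k)) (b : Fin n)
    (hb : ∀ c ∈ S, (c : ℕ) ≠ b.1 ∧ (c : ℕ) + (n - k) ≠ b.1) : fS hkk S b = b := by
  induction S using Finset.induction_on with
  | empty => rw [fS_empty]; rfl
  | @insert a S ha ih =>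
    rw [fS_insert hkk a S ha]
    have hr := ih (fun c hc => hb c (Finset.mem_insert_of_mem hc))
    simp only [Equiv.Perm.mul_apply, hr]
    apply sw_apply_ne
    · have := (hb a (Finset.mem_insert_self a S)).1
      intro hh; rw [hh] at this; simp at this
    · have := (hb a (Finset.mem_insert_self a S)).2
      intro hh; rw [hh] at this; simp at this

lemma fS_apply_bx0_not (S : Finset (Fin k)) (c : Fin k) (hc : c ∉ S) :
    fS hkk S (bx0 n k hkk c) = bx0 n k hkk c := by
  apply fS_apply_notin
  intro c' hc'
  simp only [bx0_val]
  constructor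
  · intro hh; exact hc (by rwa [show c' = c from Fin.ext hh] at hc')
  · have := c.2; omega

lemma fS_apply_bx1_not (S : Finset (Fin k)) (c : Fin k) (hc : c ∉ S) :
    fS hkk S (bx1 n k hkk c) = bx1 n k hkk c := by
  apply fS_apply_notin
  intro c' hc'
  have := c'.2
  simp only [bx1_val]
  constructor
  · omega
  · intro hh
    exact hc (by rwa [show c' = c from Fin.ext (by omega)] at hc')

lemma fS_apply_bx0 (S : Finset (Fin k)) (c : Fin k) (hc : c ∈ S) :
    fS hkk S (bx0 n k hkk c) = bx1 n k hkk c := by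
  induction S using Finset.induction_on with
  | empty => exact absurd hc (Finset.notMem_empty c)
  | @insert a S ha ih =>
    rw [fS_insert hkk a S ha]
    rcases Finset.mem_insert.1 hc with rfl | hc'
    · have h1 : fS hkk S (bx0 n k hkk c) = bx0 n k hkk c := fS_apply_bx0_not hkk S c ha
      simp only [Equiv.Perm.mul_apply, h1, sw, Equiv.swap_apply_left]
    · have h1 := ih hc'
      simp only [Equiv.Perm.mul_apply, h1]
      apply sw_apply_ne
      · exact fun hh => bx0_ne_bx1 hkk a c hh.symm
      · intro hh
        have := bx1_inj hkk hh
        exact ha (this ▸ hc')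

lemma fS_apply_bx1 (S : Finset (Fin k)) (c : Fin k) (hc : c ∈ S) :
    fS hkk S (bx1 n k hkk c) = bx0 n k hkk c := by
  induction S using Finset.induction_on with
  | empty => exact absurd hc (Finset.notMem_empty c)
  | @insert a S ha ih =>
    rw [fS_insert hkk a S ha]
    rcases Finset.mem_insert.1 hc with rfl | hc'
    · have h1 : fS hkk S (bx1 n k hkk c) = bx1 n k hkk c := fS_apply_bx1_not hkk S c ha
      simp only [Equiv.Perm.mul_apply, h1, sw, Equiv.swap_apply_right]
    · have h1 := ih hc'
      simp only [Equiv.Perm.mul_apply, h1]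
      apply sw_apply_ne
      · intro hh
        have := bx0_inj hkk hh
        exact ha (this ▸ hc')
      · exact bx0_ne_bx1 hkk c a

lemma sign_fS (S : Finset (Fin k)) :
    Equiv.Perm.sign (fS hkk S) = (-1) ^ S.card := by
  induction S using Finset.induction_on with
  | empty => rw [fS_empty]; simp
  | @insert a S ha ih =>
    rw [fS_insert hkk a S ha, Finset.card_insert_of_notMem ha]
    rw [show Equiv.Perm.sign (sw hkk a * fS hkk S)
        = Equiv.Perm.sign (sw hkk a) * Equiv.Perm.sign (fS hkk S) from map_mul _ _ _]
    rw [ih, sw, Equiv.Perm.sign_swap (bx0_ne_bx1 hkk a a), pow_succ, mul_comm]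

lemma fS_mem_colGroup (S : Finset (Fin k)) : fS hkk S ∈ colGroup n 2 ![n - k, k] := by
  rw [colGroup, Finset.mem_filter]
  refine ⟨Finset.mem_univ _, fun b => ?_⟩
  have hkn : k ≤ n := by omega
  have hco : ∀ x : Fin n, colOf 2 ![n - k, k] (x : ℕ)
      = if (x : ℕ) < n - k then (x : ℕ) else (x : ℕ) - (n - k) :=
    fun x => colOf_two n k x x.2 hkn
  rcases lt_or_ge (b : ℕ) k with hb | hb
  · set c : Fin k := ⟨b.1, hb⟩ with hcdef
    have hbc : b = bx0 n k hkk c := Fin.ext rfl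
    by_cases hcS : c ∈ S
    · rw [hbc, fS_apply_bx0 hkk S c hcS, hco, hco]
      simp only [bx0_val, bx1_val]
      have := c.2; simp only [show ¬ ((c : ℕ) + (n - k) < n - k) from by omega, show (c : ℕ) < n - k from by omega, ↓reduceIte]; omega
    · rw [hbc, fS_apply_bx0_not hkk S c hcS]
  · rcases lt_or_ge (b : ℕ) (n - k) with hb2 | hb2
    · rw [fS_apply_notin hkk S b (fun c hc => by have := c.2; constructor <;> omega)]
    · set c : Fin k := ⟨b.1 - (n - k), by have := b.2; omega⟩ with hcdef
      have hbc : b = bx1 n k hkk c := Fin.ext (by simp only [bx1_val, hcdef]; omega)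
      by_cases hcS : c ∈ S
      · rw [hbc, fS_apply_bx1 hkk S c hcS, hco, hco]
        simp only [bx0_val, bx1_val]
        have := c.2; simp only [show ¬ ((c : ℕ) + (n - k) < n - k) from by omega, show (c : ℕ) < n - k from by omega, ↓reduceIte]; omega
      · rw [hbc, fS_apply_bx1_not hkk S c hcS]


lemma colGroup_eq (σ : Equiv.Perm (Fin n)) (hσ : σ ∈ colGroup n 2 ![n - k, k]) :
    σ = fS hkk (Finset.univ.filter fun c : Fin k => σ (bx0 n k hkk c) ≠ bx0 n k hkk c) := by
  have hkn : k ≤ n := by omega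
  have key : ∀ x : Fin n, colOf 2 ![n - k, k] ((σ x : Fin n) : ℕ) = colOf 2 ![n - k, k] (x : ℕ) :=
    (Finset.mem_filter.1 hσ).2
  have hco : ∀ x : Fin n, colOf 2 ![n - k, k] (x : ℕ)
      = if (x : ℕ) < n - k then (x : ℕ) else (x : ℕ) - (n - k) :=
    fun x => colOf_two n k x x.2 hkn
  -- values determined by column for large columns
  have claim1 : ∀ b : Fin n, k ≤ (b : ℕ) → (b : ℕ) < n - k → σ b = b := by
    intro b h1 h2
    have := key b
    rw [hco, hco, if_pos h2] at this
    have h3 := (σ b).2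
    apply Fin.ext
    rcases lt_or_ge ((σ b : Fin n) : ℕ) (n - k) with h4 | h4
    · rwa [if_pos h4] at this
    · rw [if_neg (by omega)] at this; omega
  have claim2 : ∀ c : Fin k, σ (bx0 n k hkk c) = bx0 n k hkk c ∧ σ (bx1 n k hkk c) = bx1 n k hkk c
      ∨ σ (bx0 n k hkk c) = bx1 n k hkk c ∧ σ (bx1 n k hkk c) = bx0 n k hkk c := by
    intro c
    have hc2 := c.2
    have mem : ∀ x : Fin n, colOf 2 ![n - k, k] (x : ℕ) = (c : ℕ) →
        x = bx0 n k hkk c ∨ x = bx1 n k hkk c := by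
      intro x hx
      rw [hco] at hx
      rcases lt_or_ge (x : ℕ) (n - k) with h4 | h4
      · left; apply Fin.ext; rw [if_pos h4] at hx; exact hx
      · right; apply Fin.ext; rw [if_neg (by omega)] at hx
        show (x : ℕ) = (c : ℕ) + (n - k)
        omega
    have h0 : σ (bx0 n k hkk c) = bx0 n k hkk c ∨ σ (bx0 n k hkk c) = bx1 n k hkk c := by
      apply mem; rw [key]; rw [hco]
      have hc2' := c.2
      rw [if_pos (by simp only [bx0_val]; omega)]
      simp only [bx0_val]
    have h1 : σ (bx1 n k hkk c) = bx0 n k hkk c ∨ σ (bx1 n k hkk c) = bx1 n k hkk c := by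
      apply mem; rw [key]; rw [hco]
      rw [if_neg (by simp only [bx1_val]; omega)]
      simp only [bx1_val]
      omega
    have hne : σ (bx0 n k hkk c) ≠ σ (bx1 n k hkk c) :=
      fun hh => bx0_ne_bx1 hkk c c (σ.injective hh)
    rcases h0 with h0 | h0 <;> rcases h1 with h1 | h1
    · exact absurd (h0.trans h1.symm) hne
    · exact Or.inl ⟨h0, h1⟩
    · exact Or.inr ⟨h0, h1⟩
    · exact absurd (h0.trans h1.symm) hne
  apply Equiv.ext
  intro b
  set S := Finset.univ.filter fun c : Fin k => σ (bx0 n k hkk c) ≠ bx0 n k hkk c with hS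
  rcases lt_or_ge (b : ℕ) k with hb | hb
  · set c : Fin k := ⟨b.1, hb⟩ with hcdef
    have hbc : b = bx0 n k hkk c := Fin.ext rfl
    by_cases hcS : c ∈ S
    · have := (Finset.mem_filter.1 hcS).2
      rcases claim2 c with ⟨h0, _⟩ | ⟨h0, _⟩
      · exact absurd h0 this
      · rw [hbc, h0, fS_apply_bx0 hkk S c hcS]
    · have hy : σ (bx0 n k hkk c) = bx0 n k hkk c := by
        by_contra hcon
        exact hcS (Finset.mem_filter.2 ⟨Finset.mem_univ _, hcon⟩)
      rw [hbc, hy, fS_apply_bx0_not hkk S c hcS]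
  · rcases lt_or_ge (b : ℕ) (n - k) with hb2 | hb2
    · rw [claim1 b hb hb2, fS_apply_notin hkk S b (fun c hc => by have := c.2; exact ⟨by omega, by omega⟩)]
    · set c : Fin k := ⟨b.1 - (n - k), by have := b.2; omega⟩ with hcdef
      have hbc : b = bx1 n k hkk c := Fin.ext (by show (b : ℕ) = (c : ℕ) + (n - k); simp [hcdef]; omega)
      by_cases hcS : c ∈ S
      · have := (Finset.mem_filter.1 hcS).2
        rcases claim2 c with ⟨h0, _⟩ | ⟨_, h1⟩
        · exact absurd h0 this
        · rw [hbc, h1, fS_apply_bx1 hkk S c hcS]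
      · have hy : σ (bx0 n k hkk c) = bx0 n k hkk c := by
          by_contra hcon
          exact hcS (Finset.mem_filter.2 ⟨Finset.mem_univ _, hcon⟩)
        rcases claim2 c with ⟨_, h1⟩ | ⟨h0, _⟩
        · rw [hbc, h1, fS_apply_bx1_not hkk S c hcS]
        · exact absurd (hy.symm.trans h0) (bx0_ne_bx1 hkk c c)

lemma sum_colGroup {M : Type*} [AddCommMonoid M] (F : Equiv.Perm (Fin n) → M) :
    ∑ σ ∈ colGroup n 2 ![n - k, k], F σ = ∑ S : Finset (Fin k), F (fS hkk S) := by
  refine Finset.sum_bij' (fun σ _ => Finset.univ.filter fun c : Fin k => σ (bx0 n k hkk c) ≠ bx0 n k hkk c)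
    (fun S _ => fS hkk S) (fun σ _ => Finset.mem_univ _) (fun S _ => fS_mem_colGroup hkk S)
    (fun σ hσ => (colGroup_eq hkk σ hσ).symm) (fun S _ => ?_) (fun σ hσ => by
      rw [← colGroup_eq hkk σ hσ])
  ext c
  simp only [Finset.mem_filter, Finset.mem_univ, true_and]
  by_cases hc : c ∈ S
  · rw [fS_apply_bx0 hkk S c hc]
    simp only [hc, iff_true]
    exact fun hh => bx0_ne_bx1 hkk c c hh.symm
  · rw [fS_apply_bx0_not hkk S c hc]
    simp [hc]



def midcount (n k : ℕ) (a : Fin n → Fin 2) : ℕ :=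
  (Finset.univ.filter fun b : Fin n => k ≤ (b : ℕ) ∧ (b : ℕ) < n - k ∧ a b = 1).card

/-- support condition -/
def SUPP (n k i : ℕ) (hkk : k + k ≤ n) (a : Fin n → Fin 2) : Prop :=
  (∀ c : Fin k, a (bx0 n k hkk c) ≠ a (bx1 n k hkk c)) ∧ midcount n k a = i - k

lemma fin2_cases (x : Fin 2) : x = 0 ∨ x = 1 := by omega
lemma fin2_ne_one {x : Fin 2} : x ≠ 1 ↔ x = 0 := by omega
lemma fin2_zero_ne_one : (0 : Fin 2) ≠ 1 := by omega


section Eval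
variable (i : ℕ) (a : Fin n → Fin 2)

/-- Step D1 -/
lemma row1_iff (S : Finset (Fin k)) :
    (∀ b : Fin n, n - k ≤ (b : ℕ) → a (fS hkk S b) = 1) ↔
      (∀ c : Fin k, a (if c ∈ S then bx0 n k hkk c else bx1 n k hkk c) = 1) := by
  constructor
  · intro h c
    have hb := h (bx1 n k hkk c) (by simp)
    by_cases hc : c ∈ S
    · rw [fS_apply_bx1 hkk S c hc] at hb; rw [if_pos hc]; exact hb
    · rw [fS_apply_bx1_not hkk S c hc] at hb; rw [if_neg hc]; exact hb
  · intro h b hb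
    have hb2 := b.2
    set c : Fin k := ⟨b.1 - (n - k), by omega⟩ with hc
    have hbc : b = bx1 n k hkk c := Fin.ext (by simp only [bx1_val, hc]; omega)
    have := h c
    by_cases hcS : c ∈ S
    · rw [hbc, fS_apply_bx1 hkk S c hcS]; rw [if_pos hcS] at this; exact this
    · rw [hbc, fS_apply_bx1_not hkk S c hcS]; rw [if_neg hcS] at this; exact this

/-- Step D2 -/
lemma count_eq (S : Finset (Fin k)) :
    (Finset.univ.filter fun b : Fin n => (b : ℕ) < n - k ∧ a (fS hkk S b) = 1).card
      = (Finset.univ.filter fun c : Fin k =>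
          a (if c ∈ S then bx1 n k hkk c else bx0 n k hkk c) = 1).card + midcount n k a := by
  classical
  set s := Finset.univ.filter fun b : Fin n => (b : ℕ) < n - k ∧ a (fS hkk S b) = 1 with hs
  have hsplit : (s.filter fun b : Fin n => (b : ℕ) < k).card
      + (s.filter fun b : Fin n => ¬ (b : ℕ) < k).card = s.card :=
    Finset.card_filter_add_card_filter_not _
  have h1 : (s.filter fun b : Fin n => (b : ℕ) < k)
      = Finset.univ.filter fun b : Fin n => (b : ℕ) < k ∧ a (fS hkk S b) = 1 := by
    rw [hs, Finset.filter_filter]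
    apply Finset.filter_congr
    intro b _
    have := b.2
    constructor
    · rintro ⟨⟨_, h⟩, h2⟩; exact ⟨h2, h⟩
    · rintro ⟨h2, h⟩; exact ⟨⟨by omega, h⟩, h2⟩
  have h2 : (s.filter fun b : Fin n => ¬ (b : ℕ) < k)
      = Finset.univ.filter fun b : Fin n => k ≤ (b : ℕ) ∧ (b : ℕ) < n - k ∧ a b = 1 := by
    rw [hs, Finset.filter_filter]
    apply Finset.filter_congr
    intro b _
    constructor
    · rintro ⟨⟨hlt, h⟩, h2⟩
      rw [fS_apply_notin hkk S b (fun c hc => by have := c.2; exact ⟨by omega, by omega⟩)] at h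
      exact ⟨by omega, hlt, h⟩
    · rintro ⟨h2, hlt, h⟩
      rw [fS_apply_notin hkk S b (fun c hc => by have := c.2; exact ⟨by omega, by omega⟩)]
      exact ⟨⟨hlt, h⟩, by omega⟩
  have h3 : (Finset.univ.filter fun b : Fin n => (b : ℕ) < k ∧ a (fS hkk S b) = 1).card
      = (Finset.univ.filter fun c : Fin k =>
          a (if c ∈ S then bx1 n k hkk c else bx0 n k hkk c) = 1).card := by
    refine Finset.card_bij' (fun b hb => (⟨b.1, by
        simp only [Finset.mem_filter] at hb; exact hb.2.1⟩ : Fin k))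
      (fun c _ => bx0 n k hkk c) ?_ ?_ ?_ ?_
    · intro b hb
      simp only [Finset.mem_filter, Finset.mem_univ, true_and] at hb ⊢
      obtain ⟨hlt, h⟩ := hb
      set c : Fin k := ⟨b.1, hlt⟩ with hc
      have hbc : b = bx0 n k hkk c := Fin.ext rfl
      by_cases hcS : c ∈ S
      · rw [hbc, fS_apply_bx0 hkk S c hcS] at h; rw [if_pos hcS]; exact h
      · rw [hbc, fS_apply_bx0_not hkk S c hcS] at h; rw [if_neg hcS]; exact h
    · intro c hc
      simp only [Finset.mem_filter, Finset.mem_univ, true_and] at hc ⊢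
      have hc2 := c.2
      refine ⟨by simp only [bx0_val]; omega, ?_⟩
      by_cases hcS : c ∈ S
      · rw [fS_apply_bx0 hkk S c hcS]; rw [if_pos hcS] at hc; exact hc
      · rw [fS_apply_bx0_not hkk S c hcS]; rw [if_neg hcS] at hc; exact hc
    · intro b hb; exact Fin.ext rfl
    · intro c hc; exact Fin.ext rfl
  rw [← hsplit, h1, h2, h3]
  rfl

/-- The pointwise evaluation of `eT`. -/
lemma eval_eT (hki : k ≤ i) (hin : i ≤ n - k) :
    eT n 2 ![n - k, k] (tki n i) a =
      if SUPP n k i hkk a then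
        (-1 : ℂ) ^ (Finset.univ.filter fun c : Fin k => a (bx0 n k hkk c) = 1).card
      else 0 := by
  have step1 : eT n 2 ![n - k, k] (tki n i) a
      = ∑ σ ∈ colGroup n 2 ![n - k, k], ((Equiv.Perm.sign σ : ℤ) : ℂ) *
          (if (fun x => a (σ x)) ∈ Finset.univ.filter (fun t' : Fin n → Fin 2 =>
            ∃ π ∈ rowGroup n 2 ![n - k, k], t' = fun x => tki n i (π⁻¹ x)) then 1 else 0) := by
    rw [eT, Finset.sum_apply]
    apply Finset.sum_congr rfl
    intro σ _
    rw [Pi.smul_apply, Finset.sum_apply, smul_eq_mul]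
    congr 1
    rw [← Finset.sum_ite_eq' (Finset.univ.filter (fun t' : Fin n → Fin 2 =>
      ∃ π ∈ rowGroup n 2 ![n - k, k], t' = fun x => tki n i (π⁻¹ x))) (fun x => a (σ x))
      (fun _ => (1 : ℂ))]
    apply Finset.sum_congr rfl
    intro t' _
    rw [Pi.single_apply]
    congr 1
    apply propext
    constructor
    · intro h; funext y
      rw [h]
      simp
    · intro h; funext x
      rw [h]
      simp
  rw [step1, sum_colGroup hkk]
  have step2 : ∀ S : Finset (Fin k), ((Equiv.Perm.sign (fS hkk S) : ℤ) : ℂ) = (-1) ^ S.card := by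
    intro S
    rw [sign_fS hkk S]
    push_cast
    rfl
  have step3 : ∀ S : Finset (Fin k),
      ((fun x => a (fS hkk S x)) ∈ Finset.univ.filter (fun t' : Fin n → Fin 2 =>
        ∃ π ∈ rowGroup n 2 ![n - k, k], t' = fun x => tki n i (π⁻¹ x)))
      ↔ ((∀ c : Fin k, a (if c ∈ S then bx0 n k hkk c else bx1 n k hkk c) = 1) ∧
          (Finset.univ.filter fun c : Fin k =>
            a (if c ∈ S then bx1 n k hkk c else bx0 n k hkk c) = 1).card + midcount n k a = i - k) := by
    intro S
    rw [Finset.mem_filter]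
    rw [mem_orbit_iff n k i hkk hki hin]
    rw [row1_iff hkk a S]
    rw [count_eq hkk a S]
    simp
  have step4 : ∑ S : Finset (Fin k), ((Equiv.Perm.sign (fS hkk S) : ℤ) : ℂ) *
      (if (fun x => a (fS hkk S x)) ∈ Finset.univ.filter (fun t' : Fin n → Fin 2 =>
        ∃ π ∈ rowGroup n 2 ![n - k, k], t' = fun x => tki n i (π⁻¹ x)) then 1 else 0)
      = ∑ S : Finset (Fin k), (-1 : ℂ) ^ S.card *
        (if ((∀ c : Fin k, a (if c ∈ S then bx0 n k hkk c else bx1 n k hkk c) = 1) ∧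
          (Finset.univ.filter fun c : Fin k =>
            a (if c ∈ S then bx1 n k hkk c else bx0 n k hkk c) = 1).card + midcount n k a = i - k)
          then 1 else 0) := by
    apply Finset.sum_congr rfl
    intro S _
    rw [step2 S]
    congr 1
    rw [if_congr (step3 S) rfl rfl]
  rw [step4]
  clear step1 step2 step3 step4
  by_cases hmix : ∀ c : Fin k, a (bx0 n k hkk c) ≠ a (bx1 n k hkk c)
  · -- mixed case
    set Sstar := Finset.univ.filter fun c : Fin k => a (bx0 n k hkk c) = 1 with hSstar
    have c1 : ∀ S : Finset (Fin k),
        (∀ c : Fin k, a (if c ∈ S then bx0 n k hkk c else bx1 n k hkk c) = 1) ↔ S = Sstar := by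
      intro S
      constructor
      · intro hP
        ext c
        rw [hSstar, Finset.mem_filter]
        by_cases hc : c ∈ S
        · have := hP c; rw [if_pos hc] at this
          exact ⟨fun _ => ⟨Finset.mem_univ _, this⟩, fun _ => hc⟩
        · have := hP c; rw [if_neg hc] at this
          have h0 : a (bx0 n k hkk c) ≠ 1 := fun hh => hmix c (hh.trans this.symm)
          exact ⟨fun h => absurd h hc, fun h => absurd h.2 h0⟩
      · rintro rfl
        intro c
        by_cases hc : c ∈ Sstar
        · rw [if_pos hc]
          exact (Finset.mem_filter.1 hc).2
        · rw [if_neg hc]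
          have h0 : a (bx0 n k hkk c) ≠ 1 := fun hh =>
            hc (Finset.mem_filter.2 ⟨Finset.mem_univ _, hh⟩)
          have h1 := hmix c
          rcases fin2_cases (a (bx1 n k hkk c)) with h | h
          · rw [fin2_ne_one.1 h0, h] at h1; exact absurd rfl h1
          · exact h
    have c2 : (Finset.univ.filter fun c : Fin k =>
        a (if c ∈ Sstar then bx1 n k hkk c else bx0 n k hkk c) = 1).card = 0 := by
      rw [Finset.card_eq_zero, Finset.filter_eq_empty_iff]
      intro c _
      by_cases hc : c ∈ Sstar
      · rw [if_pos hc]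
        have := (Finset.mem_filter.1 hc).2
        have h1 := hmix c
        rw [this] at h1
        exact fun hh => h1 hh.symm
      · rw [if_neg hc]
        exact fun hh => hc (Finset.mem_filter.2 ⟨Finset.mem_univ _, hh⟩)
    rw [Finset.sum_eq_single Sstar]
    · rw [c2]
      have hsupp : SUPP n k i hkk a ↔ midcount n k a = i - k := by
        unfold SUPP
        exact ⟨fun h => h.2, fun h => ⟨hmix, h⟩⟩
      by_cases hmid : midcount n k a = i - k
      · rw [if_pos (hsupp.2 hmid), if_pos ⟨(c1 Sstar).2 rfl, by omega⟩, mul_one]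
      · rw [if_neg (fun hh => hmid (hsupp.1 hh)), if_neg (by
          rintro ⟨_, hcnt⟩
          exact hmid (by omega)), mul_zero]
    · intro S _ hS
      rw [if_neg (fun hh => hS ((c1 S).1 hh.1)), mul_zero]
    · intro h; exact absurd (Finset.mem_univ _) h
  · -- degenerate case
    push_neg at hmix
    obtain ⟨c₀, hc₀⟩ := hmix
    rw [if_neg (fun hh => hh.1 c₀ hc₀)]
    rcases fin2_cases (a (bx0 n k hkk c₀)) with hv | hv
    · apply Finset.sum_eq_zero
      intro S _
      rw [if_neg, mul_zero]
      rintro ⟨hP, _⟩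
      have := hP c₀
      by_cases hc : c₀ ∈ S
      · rw [if_pos hc, hv] at this; exact fin2_zero_ne_one this
      · rw [if_neg hc, ← hc₀, hv] at this; exact fin2_zero_ne_one this
    · -- both equal 1 : involution
      apply Finset.sum_involution
        (g := fun S _ => if c₀ ∈ S then S.erase c₀ else insert c₀ S)
      · intro S _
        have hinv : ∀ c : Fin k,
            (a (if c ∈ (if c₀ ∈ S then S.erase c₀ else insert c₀ S) then bx0 n k hkk c
                else bx1 n k hkk c) = 1)
            = (a (if c ∈ S then bx0 n k hkk c else bx1 n k hkk c) = 1) := by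
          intro c
          apply propext
          have hval0 : a (bx0 n k hkk c₀) = 1 := hv
          have hval1 : a (bx1 n k hkk c₀) = 1 := hc₀.symm.trans hv
          by_cases hcc : c = c₀
          · subst hcc
            by_cases hc : c ∈ S
            · rw [if_pos hc, if_pos hc, if_neg (Finset.notMem_erase c S), hval0, hval1]
            · rw [if_neg hc, if_neg hc, if_pos (Finset.mem_insert_self c S), hval0, hval1]
          · have hmem' : (c ∈ (if c₀ ∈ S then S.erase c₀ else insert c₀ S)) ↔ c ∈ S := by
              by_cases hc : c₀ ∈ S
              · rw [if_pos hc]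
                exact ⟨Finset.mem_of_mem_erase, fun h => Finset.mem_erase_of_ne_of_mem hcc h⟩
              · rw [if_neg hc]
                exact ⟨fun h => (Finset.mem_insert.1 h).resolve_left hcc,
                  Finset.mem_insert_of_mem⟩
            by_cases hcS : c ∈ S
            · rw [if_pos (hmem'.2 hcS), if_pos hcS]
            · rw [if_neg (fun h => hcS (hmem'.1 h)), if_neg hcS]
        have hinv2 : ∀ c : Fin k,
            (a (if c ∈ (if c₀ ∈ S then S.erase c₀ else insert c₀ S) then bx1 n k hkk c
                else bx0 n k hkk c) = 1)
            = (a (if c ∈ S then bx1 n k hkk c else bx0 n k hkk c) = 1) := by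
          intro c
          apply propext
          have hval0 : a (bx0 n k hkk c₀) = 1 := hv
          have hval1 : a (bx1 n k hkk c₀) = 1 := hc₀.symm.trans hv
          by_cases hcc : c = c₀
          · subst hcc
            by_cases hc : c ∈ S
            · rw [if_pos hc, if_pos hc, if_neg (Finset.notMem_erase c S), hval0, hval1]
            · rw [if_neg hc, if_neg hc, if_pos (Finset.mem_insert_self c S), hval0, hval1]
          · have hmem' : (c ∈ (if c₀ ∈ S then S.erase c₀ else insert c₀ S)) ↔ c ∈ S := by
              by_cases hc : c₀ ∈ S
              · rw [if_pos hc]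
                exact ⟨Finset.mem_of_mem_erase, fun h => Finset.mem_erase_of_ne_of_mem hcc h⟩
              · rw [if_neg hc]
                exact ⟨fun h => (Finset.mem_insert.1 h).resolve_left hcc,
                  Finset.mem_insert_of_mem⟩
            by_cases hcS : c ∈ S
            · rw [if_pos (hmem'.2 hcS), if_pos hcS]
            · rw [if_neg (fun h => hcS (hmem'.1 h)), if_neg hcS]
        have hcond : ((∀ c : Fin k, a (if c ∈ (if c₀ ∈ S then S.erase c₀ else insert c₀ S)
              then bx0 n k hkk c else bx1 n k hkk c) = 1) ∧
            (Finset.univ.filter fun c : Fin k =>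
              a (if c ∈ (if c₀ ∈ S then S.erase c₀ else insert c₀ S) then bx1 n k hkk c
                else bx0 n k hkk c) = 1).card + midcount n k a = i - k)
            ↔ ((∀ c : Fin k, a (if c ∈ S then bx0 n k hkk c else bx1 n k hkk c) = 1) ∧
            (Finset.univ.filter fun c : Fin k =>
              a (if c ∈ S then bx1 n k hkk c else bx0 n k hkk c) = 1).card
              + midcount n k a = i - k) := by
          constructor
          · rintro ⟨hA, hB⟩
            refine ⟨fun c => by rw [← hinv c]; exact hA c, ?_⟩
            rw [show (Finset.univ.filter fun c : Fin k =>
              a (if c ∈ S then bx1 n k hkk c else bx0 n k hkk c) = 1)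
              = (Finset.univ.filter fun c : Fin k =>
              a (if c ∈ (if c₀ ∈ S then S.erase c₀ else insert c₀ S) then bx1 n k hkk c
                else bx0 n k hkk c) = 1) from Finset.filter_congr (fun c _ => by rw [hinv2 c])]
            exact hB
          · rintro ⟨hA, hB⟩
            refine ⟨fun c => by rw [hinv c]; exact hA c, ?_⟩
            rw [show (Finset.univ.filter fun c : Fin k =>
              a (if c ∈ (if c₀ ∈ S then S.erase c₀ else insert c₀ S) then bx1 n k hkk c
                else bx0 n k hkk c) = 1)
              = (Finset.univ.filter fun c : Fin k =>
              a (if c ∈ S then bx1 n k hkk c else bx0 n k hkk c) = 1)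
              from Finset.filter_congr (fun c _ => by rw [hinv2 c])]
            exact hB
        have hcard : (if c₀ ∈ S then S.erase c₀ else insert c₀ S).card
            = if c₀ ∈ S then S.card - 1 else S.card + 1 := by
          by_cases hc : c₀ ∈ S
          · rw [if_pos hc, if_pos hc, Finset.card_erase_of_mem hc]
          · rw [if_neg hc, if_neg hc, Finset.card_insert_of_notMem hc]
        rw [if_congr hcond rfl rfl]
        have hsgn : (-1 : ℂ) ^ (if c₀ ∈ S then S.erase c₀ else insert c₀ S).card
            = -(-1 : ℂ) ^ S.card := by
          rw [hcard]
          by_cases hc : c₀ ∈ S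
          · rw [if_pos hc]
            obtain ⟨m, hm⟩ : ∃ m, S.card = m + 1 :=
              ⟨S.card - 1, by have := Finset.card_pos.2 ⟨c₀, hc⟩; omega⟩
            rw [hm, Nat.add_sub_cancel, pow_succ]
            ring
          · rw [if_neg hc, pow_succ]
            ring
        rw [hsgn]
        ring
      · intro S _ hne
        by_cases hc : c₀ ∈ S
        · rw [if_pos hc]
          intro hh
          exact Finset.notMem_erase c₀ S (by rw [hh]; exact hc)
        · rw [if_neg hc]
          intro hh
          exact hc (by rw [← hh]; exact Finset.mem_insert_self c₀ S)
      · intro S _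
        first
        | exact Finset.mem_univ _
        | (by_cases hc : c₀ ∈ S
           · simp only [if_pos hc, if_neg (Finset.notMem_erase c₀ S), Finset.insert_erase hc]
           · simp only [if_neg hc, if_pos (Finset.mem_insert_self c₀ S), Finset.erase_insert hc])
      · intro S _
        first
        | exact Finset.mem_univ _
        | (by_cases hc : c₀ ∈ S
           · simp only [if_pos hc, if_neg (Finset.notMem_erase c₀ S), Finset.insert_erase hc]
           · simp only [if_neg hc, if_pos (Finset.mem_insert_self c₀ S), Finset.erase_insert hc])

end Eval

lemma psi_bx0 (g : Fin k → Fin 2) (T : Finset (Fin n)) (c : Fin k) :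
    psi' g T (bx0 n k hkk c) = g c := by
  unfold psi'
  rw [dif_pos (show ((bx0 n k hkk c) : ℕ) < k from c.2)]
  rfl

lemma psi_bx1 (g : Fin k → Fin 2) (T : Finset (Fin n)) (c : Fin k) :
    psi' g T (bx1 n k hkk c) = if g c = 1 then 0 else 1 := by
  unfold psi'
  have h2 := c.2
  rw [dif_neg (by simp only [bx1_val]; omega), dif_neg (by simp only [bx1_val]; omega)]
  have he : (⟨(bx1 n k hkk c).1 - (n - k), by have := (bx1 n k hkk c).2; omega⟩ : Fin k) = c :=
    Fin.ext (by simp only [bx1_val]; omega)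
  rw [he]

lemma psi_mid (g : Fin k → Fin 2) (T : Finset (Fin n)) (b : Fin n)
    (h1 : k ≤ (b : ℕ)) (h2 : (b : ℕ) < n - k) :
    psi' g T b = if b ∈ T then 1 else 0 := by
  unfold psi'
  rw [dif_neg (by omega), dif_pos h2]

lemma card_SUPP (i : ℕ) (hki : k ≤ i) (hin : i ≤ n - k) :
    (Finset.univ.filter fun a : Fin n → Fin 2 => SUPP n k i hkk a).card
      = 2 ^ k * (n - 2 * k).choose (i - k) := by
  classical
  set MID := Finset.univ.filter fun b : Fin n => k ≤ (b : ℕ) ∧ (b : ℕ) < n - k with hMID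
  have hMIDcard : MID.card = n - 2 * k := by
    rw [hMID, card_filter_interval n k (n - k) (by omega)]
    omega
  have key : (Finset.univ.filter fun a : Fin n → Fin 2 => SUPP n k i hkk a).card
      = ((Finset.univ : Finset (Fin k → Fin 2)) ×ˢ Finset.powersetCard (i - k) MID).card := by
    refine Finset.card_bij'
      (fun a _ => (fun c => a (bx0 n k hkk c),
        Finset.univ.filter fun b : Fin n => k ≤ (b : ℕ) ∧ (b : ℕ) < n - k ∧ a b = 1))
      (fun gT _ => psi' gT.1 gT.2) ?_ ?_ ?_ ?_
    · intro a ha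
      simp only [Finset.mem_filter, Finset.mem_univ, true_and] at ha
      rw [Finset.mem_product]
      refine ⟨Finset.mem_univ _, ?_⟩
      rw [Finset.mem_powersetCard]
      constructor
      · intro b hb
        simp only [Finset.mem_filter, Finset.mem_univ, true_and] at hb ⊢
        rw [hMID]
        simp only [Finset.mem_filter, Finset.mem_univ, true_and]
        exact ⟨hb.1, hb.2.1⟩
      · exact ha.2
    · rintro ⟨g, T⟩ hgT
      rw [Finset.mem_product, Finset.mem_powersetCard] at hgT
      obtain ⟨-, hT, hTcard⟩ := hgT
      simp only [Finset.mem_filter, Finset.mem_univ, true_and]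
      constructor
      · intro c
        rw [psi_bx0, psi_bx1]
        rcases fin2_cases (g c) with h | h <;> rw [h] <;> simp
      · unfold midcount
        have : (Finset.univ.filter fun b : Fin n =>
            k ≤ (b : ℕ) ∧ (b : ℕ) < n - k ∧ psi' g T b = 1) = T := by
          ext b
          simp only [Finset.mem_filter, Finset.mem_univ, true_and]
          constructor
          · rintro ⟨h1, h2, h3⟩
            rw [psi_mid g T b h1 h2] at h3
            by_contra hb
            rw [if_neg hb] at h3
            exact absurd h3 (by decide)
          · intro hb
            have hbM := hT hb
            rw [hMID] at hbM
            simp only [Finset.mem_filter, Finset.mem_univ, true_and] at hbM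
            exact ⟨hbM.1, hbM.2, by rw [psi_mid g T b hbM.1 hbM.2, if_pos hb]⟩
        rw [this, hTcard]
    · intro a ha
      simp only [Finset.mem_filter, Finset.mem_univ, true_and] at ha
      dsimp only
      funext b
      rcases lt_or_ge (b : ℕ) k with hb | hb
      · set c : Fin k := ⟨b.1, hb⟩ with hc
        have hbc : b = bx0 n k hkk c := Fin.ext rfl
        rw [hbc, psi_bx0]
      · rcases lt_or_ge (b : ℕ) (n - k) with hb2 | hb2
        · rw [psi_mid _ _ b hb hb2]
          simp only [Finset.mem_filter, Finset.mem_univ, true_and]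
          rcases fin2_cases (a b) with h | h
          · rw [if_neg (by rintro ⟨-, -, hh⟩; exact absurd (h.symm.trans hh) (by decide)), h]
          · rw [if_pos ⟨hb, hb2, h⟩, h]
        · set c : Fin k := ⟨b.1 - (n - k), by have := b.2; omega⟩ with hc
          have hbc : b = bx1 n k hkk c := Fin.ext (by simp only [bx1_val, hc]; omega)
          rw [hbc, psi_bx1]
          have hmix := ha.1 c
          rcases fin2_cases (a (bx0 n k hkk c)) with h | h
          · rw [if_neg (by rw [h]; decide)]
            rcases fin2_cases (a (bx1 n k hkk c)) with h' | h'
            · rw [h, h'] at hmix; exact absurd rfl hmix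
            · rw [h']
          · rw [if_pos h]
            rcases fin2_cases (a (bx1 n k hkk c)) with h' | h'
            · rw [h']
            · rw [h, h'] at hmix; exact absurd rfl hmix
    · rintro ⟨g, T⟩ hgT
      rw [Finset.mem_product, Finset.mem_powersetCard] at hgT
      obtain ⟨-, hT, hTcard⟩ := hgT
      dsimp only
      have hTeq : (Finset.univ.filter fun b : Fin n =>
          k ≤ (b : ℕ) ∧ (b : ℕ) < n - k ∧ psi' g T b = 1) = T := by
        ext b
        simp only [Finset.mem_filter, Finset.mem_univ, true_and]
        constructor
        · rintro ⟨h1, h2, h3⟩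
          rw [psi_mid g T b h1 h2] at h3
          by_contra hb
          rw [if_neg hb] at h3
          exact absurd h3 (by decide)
        · intro hb
          have hbM := hT hb
          rw [hMID] at hbM
          simp only [Finset.mem_filter, Finset.mem_univ, true_and] at hbM
          exact ⟨hbM.1, hbM.2, by rw [psi_mid g T b hbM.1 hbM.2, if_pos hb]⟩
      have hgeq : (fun c => psi' g T (bx0 n k hkk c)) = g := by
        funext c; rw [psi_bx0]
      rw [Prod.mk.injEq]
      exact ⟨hgeq, hTeq⟩
  rw [key, Finset.card_product, Finset.card_powersetCard, hMIDcard, Finset.card_univ,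
    Fintype.card_fun, Fintype.card_fin, Fintype.card_fin]


end NK
end S13

/-- for `λ = (n-k,k)`, `⟨e_{t_{k,i}}, e_{t_{k,j}}⟩ = δ_{i,j} 2^k C(n-2k, i-k)`. -/
theorem stmt_13 (n k i j : ℕ) (hn : 1 ≤ n) (hk : k ≤ n / 2)
    (hki : k ≤ i) (hin : i ≤ n - k) (hkj : k ≤ j) (hjn : j ≤ n - k) :
    sinner (eT n 2 ![n - k, k] (tki n i)) (eT n 2 ![n - k, k] (tki n j)) =
      if i = j then ((2 ^ k * (n - 2 * k).choose (i - k) : ℕ) : ℂ) else 0 := by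
  have hkk : k + k ≤ n := by omega
  unfold sinner
  by_cases hij : i = j
  · subst hij
    rw [if_pos rfl]
    have : ∀ a : Fin n → Fin 2,
        eT n 2 ![n - k, k] (tki n i) a * (starRingEnd ℂ) (eT n 2 ![n - k, k] (tki n i) a)
          = if S13.SUPP n k i hkk a then 1 else 0 := by
      intro a
      rw [S13.eval_eT hkk i a hki hin]
      by_cases h : S13.SUPP n k i hkk a
      · rw [if_pos h, if_pos h]
        rw [map_pow, map_neg, _root_.map_one, ← pow_add, ← two_mul, pow_mul, neg_one_sq, one_pow]
      · rw [if_neg h, if_neg h, map_zero, mul_zero]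
    rw [Finset.sum_congr rfl (fun a _ => this a)]
    rw [Finset.sum_boole]
    rw [S13.card_SUPP hkk i hki hin]
  · rw [if_neg hij]
    apply Finset.sum_eq_zero
    intro a _
    rw [S13.eval_eT hkk i a hki hin, S13.eval_eT hkk j a hkj hjn]
    by_cases h : S13.SUPP n k i hkk a
    · have hnj : ¬ S13.SUPP n k j hkk a := by
        intro h'
        exact hij (by have h1 := h.2; have h2 := h'.2; omega)
      rw [if_neg hnj, map_zero, mul_zero]
    · rw [if_neg h, zero_mul]
end
end

section
/- For all nonnegative integers n, k, t, i, j with k ≤ ⌊n/2⌋, k ≤ i ≤ n−k, k ≤ j ≤ n−k, t ≤ min(i,j) and i + j − t ≤ n, the following binomial identity holds: C(n−2k, i−k) · Σ_{s=0}^{j−k} (−1)^{j−t−s} C(n−k−i, s) C(i−k, j−k−s) C(k, j−t−s) = Σ_{u=0}^{n} (−1)^{u−t} C(u, t) C(n−2k, u−k) C(n−k−u, i−u) C(n−k−u, j−u). -/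
noncomputable section

/-- Integer binomial coefficient `C(a,b)`, with the convention `C(a,b) = 0` if `b < 0`
or `b > a`. -/
def zchoose (a b : ℤ) : ℤ :=
  if 0 ≤ b ∧ b ≤ a then (a.toNat).choose b.toNat else 0

/-- The sign `(-1)^z` for an integer `z`. -/
def isign (z : ℤ) : ℤ := if z % 2 = 0 then 1 else -1

lemma zchoose_of_neg {a b : ℤ} (h : b < 0) : zchoose a b = 0 := by
  rw [zchoose, if_neg (by omega)]

lemma zchoose_of_gt {a b : ℤ} (h : a < b) : zchoose a b = 0 := by
  rw [zchoose, if_neg (by omega)]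

lemma zchoose_coe (a : ℕ) (b : ℤ) (hb : 0 ≤ b) :
    zchoose (a : ℤ) b = (a.choose b.toNat : ℤ) := by
  rw [zchoose]
  by_cases h : b ≤ (a : ℤ)
  · rw [if_pos ⟨hb, h⟩, Int.toNat_natCast]
  · rw [if_neg (by tauto), Nat.choose_eq_zero_of_lt (by omega), Nat.cast_zero]

lemma zchoose_natCast (a b : ℕ) : zchoose (a : ℤ) (b : ℤ) = (a.choose b : ℤ) := by
  rw [zchoose_coe a b (by positivity), Int.toNat_natCast]

lemma zchoose_pascal (a : ℕ) (b : ℤ) :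
    zchoose ((a : ℤ) + 1) b = zchoose (a : ℤ) b + zchoose (a : ℤ) (b - 1) := by
  rcases lt_or_ge b 0 with h | h
  · rw [zchoose_of_neg h, zchoose_of_neg h, zchoose_of_neg (by omega)]; ring
  rcases eq_or_lt_of_le h with h0 | h0
  · rw [← h0]
    rw [show ((a : ℤ) + 1) = ((a + 1 : ℕ) : ℤ) by push_cast; ring]
    rw [zchoose_coe _ _ le_rfl, zchoose_coe _ _ le_rfl, zchoose_of_neg (by omega)]
    simp
  · have h1 : (0:ℤ) ≤ b - 1 := by omega
    rw [show ((a : ℤ) + 1) = ((a + 1 : ℕ) : ℤ) by push_cast; ring]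
    rw [zchoose_coe _ _ h, zchoose_coe _ _ h, zchoose_coe _ _ h1]
    have hb : b.toNat = (b - 1).toNat + 1 := by omega
    rw [hb, Nat.choose_succ_succ]
    push_cast; ring

lemma zchoose_symm (a : ℕ) (b : ℤ) : zchoose (a : ℤ) b = zchoose (a : ℤ) ((a : ℤ) - b) := by
  rcases lt_or_ge b 0 with h | h
  · rw [zchoose_of_neg h, zchoose_of_gt (by omega)]
  rcases le_or_gt b a with h2 | h2
  · rw [zchoose_coe _ _ h, zchoose_coe _ _ (by omega)]
    have : ((a : ℤ) - b).toNat = a - b.toNat := by omega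
    rw [this, Nat.choose_symm (by omega)]
  · rw [zchoose_of_gt h2, zchoose_of_neg (by omega)]

lemma zchoose_trinomial (a : ℕ) (b c : ℤ) :
    zchoose (a : ℤ) b * zchoose ((a : ℤ) - b) (c - b) = zchoose (a : ℤ) c * zchoose c b := by
  rcases lt_or_ge b 0 with hb | hb
  · rw [zchoose_of_neg hb, zchoose_of_neg hb]; ring
  rcases lt_or_ge (a : ℤ) b with hb2 | hb2
  · rw [zchoose_of_gt hb2]
    rcases lt_or_ge c 0 with hc | hc
    · rw [zchoose_of_neg hc]; ring
    rcases lt_or_ge (a : ℤ) c with hc2 | hc2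
    · rw [zchoose_of_gt hc2]; ring
    · rw [zchoose_of_gt (a := c) (by omega)]; ring
  -- now 0 ≤ b ≤ a
  rcases lt_or_ge c b with hc | hc
  · rw [zchoose_of_neg (show c - b < 0 by omega)]
    rcases lt_or_ge c 0 with hc0 | hc0
    · rw [zchoose_of_neg hc0]; ring
    · rw [zchoose_of_gt (a := c) (by omega)]; ring
  rcases lt_or_ge (a : ℤ) c with hc2 | hc2
  · rw [zchoose_of_gt hc2, zchoose_of_gt (show (a:ℤ) - b < c - b by omega)]; ring
  -- 0 ≤ b ≤ c ≤ a
  have e1 : (a : ℤ) - b = ((a - b.toNat : ℕ) : ℤ) := by omega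
  have e3 : c = ((c.toNat : ℕ) : ℤ) := by omega
  rw [e1, e3, zchoose_coe _ _ hb, zchoose_coe _ _ (by omega), zchoose_natCast,
    zchoose_coe _ _ hb]
  have e2 : (((c.toNat : ℕ) : ℤ) - b).toNat = c.toNat - b.toNat := by omega
  rw [e2]
  rw [← Nat.cast_mul, ← Nat.cast_mul, Nat.choose_mul (by omega)]

lemma zchoose_vandermonde (a b : ℕ) (m : ℤ) (N : ℕ) (hm : m ≤ N) :
    zchoose ((a : ℤ) + b) m =
      ∑ s ∈ Finset.range (N + 1), zchoose (a : ℤ) (s : ℤ) * zchoose (b : ℤ) (m - s) := by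
  rcases lt_or_ge m 0 with h | h
  · rw [zchoose_of_neg h]
    exact (Finset.sum_eq_zero fun s _ => by
      rw [zchoose_of_neg (show m - (s:ℤ) < 0 by omega)]; ring).symm
  have hMN : m.toNat ≤ N := by omega
  have key : zchoose ((a : ℤ) + b) m =
      ∑ s ∈ Finset.range (m.toNat + 1), (a.choose s * b.choose (m.toNat - s) : ℤ) := by
    rw [show ((a : ℤ) + b) = ((a + b : ℕ) : ℤ) by push_cast; ring, zchoose_coe _ _ h,
      Nat.add_choose_eq, Finset.Nat.sum_antidiagonal_eq_sum_range_succ_mk]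
    push_cast; rfl
  rw [key]
  rw [show ∑ s ∈ Finset.range (N + 1), zchoose (a : ℤ) (s : ℤ) * zchoose (b : ℤ) (m - s)
      = ∑ s ∈ Finset.range (m.toNat + 1), zchoose (a : ℤ) (s : ℤ) * zchoose (b : ℤ) (m - s) from
    (Finset.sum_subset (Finset.range_subset_range.2 (by omega)) (fun s _ hs2 => by
      simp only [Finset.mem_range] at hs2
      rw [zchoose_of_neg (show m - (s:ℤ) < 0 by omega)]; ring)).symm]
  apply Finset.sum_congr rfl
  intro s hs
  simp only [Finset.mem_range] at hs
  rw [zchoose_natCast, zchoose_coe _ _ (by omega : (0:ℤ) ≤ m - s)]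
  have : (m - (s:ℤ)).toNat = m.toNat - s := by omega
  rw [this]

lemma isign_congr {a b : ℤ} (h : a % 2 = b % 2) : isign a = isign b := by
  rw [isign, isign]; by_cases h2 : a % 2 = 0
  · rw [if_pos h2, if_pos (by omega)]
  · rw [if_neg h2, if_neg (by omega)]

lemma isign_add (a b : ℤ) : isign (a + b) = isign a * isign b := by
  rw [isign, isign, isign]
  by_cases ha : a % 2 = 0 <;> by_cases hb : b % 2 = 0
  · rw [if_pos ha, if_pos hb, if_pos (by omega)]; ring
  · rw [if_pos ha, if_neg hb, if_neg (by omega)]; ring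
  · rw [if_neg ha, if_pos hb, if_neg (by omega)]; ring
  · rw [if_neg ha, if_neg hb, if_pos (by omega)]; ring

lemma isign_one : isign 1 = -1 := by
  rw [isign]; norm_num

lemma isign_succ (a : ℤ) : isign (a + 1) = -isign a := by
  rw [isign_add, isign_one]; ring

-- L6
lemma alt_sum (t : ℕ) : ∀ (M k : ℕ),
    ∑ v ∈ Finset.range (M + 1),
        isign (v : ℤ) * zchoose (M : ℤ) (v : ℤ) * zchoose ((k : ℤ) + v) (t : ℤ)
      = isign (M : ℤ) * zchoose (k : ℤ) ((t : ℤ) - M) := by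
  intro M
  induction M with
  | zero =>
    intro k
    rw [show (0:ℕ) + 1 = 1 from rfl, Finset.sum_range_one]
    simp only [Nat.cast_zero, sub_zero, add_zero]
    rw [show zchoose (0:ℤ) (0:ℤ) = 1 from by simp [zchoose]]
    ring
  | succ M ih =>
    intro k
    have step : ∀ v ∈ Finset.range (M + 1 + 1),
        isign (v : ℤ) * zchoose ((M + 1 : ℕ) : ℤ) (v : ℤ) * zchoose ((k : ℤ) + v) (t : ℤ)
        = isign (v : ℤ) * zchoose (M : ℤ) (v : ℤ) * zchoose ((k : ℤ) + v) (t : ℤ)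
          + isign (v : ℤ) * zchoose (M : ℤ) ((v : ℤ) - 1) * zchoose ((k : ℤ) + v) (t : ℤ) := by
      intro v _
      rw [show ((M + 1 : ℕ) : ℤ) = (M : ℤ) + 1 by push_cast; ring, zchoose_pascal]
      ring
    rw [Finset.sum_congr rfl step, Finset.sum_add_distrib]
    have first : ∑ v ∈ Finset.range (M + 1 + 1),
        isign (v : ℤ) * zchoose (M : ℤ) (v : ℤ) * zchoose ((k : ℤ) + v) (t : ℤ)
        = isign (M : ℤ) * zchoose (k : ℤ) ((t : ℤ) - M) := by
      rw [Finset.sum_range_succ, zchoose_of_gt (by exact_mod_cast by omega), ih k]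
      ring
    have second : ∑ v ∈ Finset.range (M + 1 + 1),
        isign (v : ℤ) * zchoose (M : ℤ) ((v : ℤ) - 1) * zchoose ((k : ℤ) + v) (t : ℤ)
        = -(isign (M : ℤ) * zchoose ((k + 1 : ℕ) : ℤ) ((t : ℤ) - M)) := by
      rw [Finset.sum_range_succ']
      have e0 : isign ((0 : ℕ) : ℤ) * zchoose (M : ℤ) (((0 : ℕ) : ℤ) - 1) *
          zchoose ((k : ℤ) + (0 : ℕ)) (t : ℤ) = 0 := by
        rw [zchoose_of_neg (by norm_num)]; ring
      rw [e0, add_zero]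
      have e1 : ∀ v ∈ Finset.range (M + 1),
          isign ((v + 1 : ℕ) : ℤ) * zchoose (M : ℤ) (((v + 1 : ℕ) : ℤ) - 1) *
            zchoose ((k : ℤ) + ((v + 1 : ℕ) : ℤ)) (t : ℤ)
          = -(isign (v : ℤ) * zchoose (M : ℤ) (v : ℤ) *
              zchoose (((k + 1 : ℕ) : ℤ) + v) (t : ℤ)) := by
        intro v _
        rw [show ((v + 1 : ℕ) : ℤ) = (v : ℤ) + 1 by push_cast; ring, isign_succ]
        rw [show (v : ℤ) + 1 - 1 = (v : ℤ) by ring,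
          show (k : ℤ) + ((v : ℤ) + 1) = ((k + 1 : ℕ) : ℤ) + v by push_cast; ring]
        ring
      rw [Finset.sum_congr rfl e1, Finset.sum_neg_distrib, ih (k + 1)]
    rw [first, second]
    have pas := zchoose_pascal k ((t : ℤ) - M)
    rw [show ((k : ℤ) + 1) = ((k + 1 : ℕ) : ℤ) by push_cast; ring] at pas
    rw [show ((M + 1 : ℕ) : ℤ) = (M : ℤ) + 1 by push_cast; ring, isign_succ,
      show (t : ℤ) - ((M : ℤ) + 1) = ((t : ℤ) - M) - 1 by ring]
    linear_combination (-(isign (M:ℤ))) * pas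

lemma zch_inner_sum (n k t M : ℕ) (h : M + k ≤ n) :
    ∑ u ∈ Finset.range (n + 1),
        isign ((u : ℤ) - t) * zchoose (u : ℤ) (t : ℤ) * zchoose (M : ℤ) ((u : ℤ) - k)
      = isign ((M : ℤ) + k - t) * zchoose (k : ℤ) ((t : ℤ) - M) := by
  have restrict : ∑ u ∈ Finset.range (n + 1),
      isign ((u : ℤ) - t) * zchoose (u : ℤ) (t : ℤ) * zchoose (M : ℤ) ((u : ℤ) - k)
      = ∑ u ∈ Finset.Ico k (k + (M + 1)),
        isign ((u : ℤ) - t) * zchoose (u : ℤ) (t : ℤ) * zchoose (M : ℤ) ((u : ℤ) - k) := by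
    refine (Finset.sum_subset (fun x hx => ?_) (fun u hu hu2 => ?_)).symm
    · simp only [Finset.mem_Ico] at hx; simp only [Finset.mem_range]; omega
    · simp only [Finset.mem_range] at hu
      simp only [Finset.mem_Ico, not_and, not_lt] at hu2
      rcases lt_or_ge u k with h1 | h1
      · rw [zchoose_of_neg (show (u:ℤ) - k < 0 by omega)]; ring
      · rw [zchoose_of_gt (show (M:ℤ) < (u:ℤ) - k by have := hu2 h1; omega)]; ring
  rw [restrict, Finset.sum_Ico_eq_sum_range]
  rw [show k + (M + 1) - k = M + 1 from by omega]
  have congr1 : ∀ v ∈ Finset.range (M + 1),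
      isign (((k + v : ℕ) : ℤ) - t) * zchoose ((k + v : ℕ) : ℤ) (t : ℤ) *
        zchoose (M : ℤ) (((k + v : ℕ) : ℤ) - k)
      = isign ((k : ℤ) - t) *
          (isign (v : ℤ) * zchoose (M : ℤ) (v : ℤ) * zchoose ((k : ℤ) + v) (t : ℤ)) := by
    intro v _
    rw [show ((k + v : ℕ) : ℤ) - t = ((k : ℤ) - t) + v by push_cast; ring, isign_add]
    rw [show ((k + v : ℕ) : ℤ) = (k : ℤ) + v by push_cast; ring]
    rw [show (k : ℤ) + v - k = (v : ℤ) by ring]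
    ring
  rw [Finset.sum_congr rfl congr1, ← Finset.mul_sum, alt_sum t M k]
  rw [show ((M : ℤ) + k - t) = ((k : ℤ) - t) + M by ring, isign_add]
  ring


/-- the binomial identity
`C(n-2k, i-k) Σ_{s=0}^{j-k} (-1)^{j-t-s} C(n-k-i, s) C(i-k, j-k-s) C(k, j-t-s)
 = Σ_{u=0}^{n} (-1)^{u-t} C(u,t) C(n-2k, u-k) C(n-k-u, i-u) C(n-k-u, j-u)`,
with the convention `C(a,b) = 0` for `b < 0` or `b > a`. -/
theorem stmt_15 (n k t i j : ℕ) (hk : k ≤ n / 2) (hki : k ≤ i) (hin : i ≤ n - k)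
    (hkj : k ≤ j) (hjn : j ≤ n - k) (hti : t ≤ i) (htj : t ≤ j) (hijt : i + j - t ≤ n) :
    zchoose ((n : ℤ) - 2 * k) ((i : ℤ) - k) *
        ∑ s ∈ Finset.range (j - k + 1),
          isign ((j : ℤ) - t - s) * zchoose ((n : ℤ) - k - i) (s : ℤ) *
            zchoose ((i : ℤ) - k) ((j : ℤ) - k - s) * zchoose (k : ℤ) ((j : ℤ) - t - s) =
      ∑ u ∈ Finset.range (n + 1),
        isign ((u : ℤ) - t) * zchoose (u : ℤ) (t : ℤ) *
          zchoose ((n : ℤ) - 2 * k) ((u : ℤ) - k) *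
          zchoose ((n : ℤ) - k - u) ((i : ℤ) - u) *
          zchoose ((n : ℤ) - k - u) ((j : ℤ) - u) := by
  have h2k : 2 * k ≤ n := by omega
  have hik : k + i ≤ n := by omega
  have hjk : k + j ≤ n := by omega
  rw [show (n : ℤ) - 2 * k = ((n - 2 * k : ℕ) : ℤ) from by omega,
    show (n : ℤ) - k - i = ((n - k - i : ℕ) : ℤ) from by omega,
    show (i : ℤ) - k = ((i - k : ℕ) : ℤ) from by omega]
  have claim : ∀ u ∈ Finset.range (n + 1),
      isign ((u : ℤ) - t) * zchoose (u : ℤ) (t : ℤ) *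
          zchoose ((n - 2 * k : ℕ) : ℤ) ((u : ℤ) - k) *
          zchoose ((n : ℤ) - k - u) ((i : ℤ) - u) *
          zchoose ((n : ℤ) - k - u) ((j : ℤ) - u)
      = ∑ s ∈ Finset.range (j - k + 1),
          zchoose ((n - 2 * k : ℕ) : ℤ) ((i - k : ℕ) : ℤ) *
            zchoose ((n - k - i : ℕ) : ℤ) (s : ℤ) *
            zchoose ((i - k : ℕ) : ℤ) ((j : ℤ) - k - s) *
            (isign ((u : ℤ) - t) * zchoose (u : ℤ) (t : ℤ) *
              zchoose ((j : ℤ) - k - s) ((u : ℤ) - k)) := by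
    intro u _
    rcases lt_or_ge u k with hu1 | hu1
    · have h0 : (u : ℤ) - k < 0 := by omega
      trans (0 : ℤ)
      · rw [zchoose_of_neg h0]; ring
      · exact (Finset.sum_eq_zero fun s _ => by rw [zchoose_of_neg h0]; ring).symm
    rcases lt_or_ge i u with hu2 | hu2
    · have h0 : (i : ℤ) - u < 0 := by omega
      trans (0 : ℤ)
      · rw [zchoose_of_neg h0]; ring
      · symm
        apply Finset.sum_eq_zero
        intro s hs
        simp only [Finset.mem_range] at hs
        rcases lt_or_ge ((j : ℤ) - k - s) ((u : ℤ) - k) with h1 | h1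
        · rw [zchoose_of_gt h1]; ring
        · rw [zchoose_of_gt (show ((i - k : ℕ) : ℤ) < (j : ℤ) - k - s from by omega)]; ring
    · have hV := zchoose_vandermonde (n - k - i) (i - u) ((j : ℤ) - u) (j - k) (by omega)
      rw [show ((n - k - i : ℕ) : ℤ) + ((i - u : ℕ) : ℤ) = (n : ℤ) - k - u from by omega] at hV
      rw [hV, Finset.mul_sum]
      apply Finset.sum_congr rfl
      intro s hs
      simp only [Finset.mem_range] at hs
      have e1 := zchoose_trinomial (n - 2 * k) ((u : ℤ) - k) ((i : ℤ) - k)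
      rw [show ((n - 2 * k : ℕ) : ℤ) - ((u : ℤ) - k) = (n : ℤ) - k - u from by omega,
        show (i : ℤ) - k - ((u : ℤ) - k) = (i : ℤ) - u from by ring,
        show (i : ℤ) - k = ((i - k : ℕ) : ℤ) from by omega] at e1
      have e2 := zchoose_trinomial (i - k) ((u : ℤ) - k) ((j : ℤ) - k - s)
      rw [show ((i - k : ℕ) : ℤ) - ((u : ℤ) - k) = ((i - u : ℕ) : ℤ) from by omega,
        show (j : ℤ) - k - s - ((u : ℤ) - k) = (j : ℤ) - u - s from by ring] at e2
      linear_combination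
        (isign ((u : ℤ) - t) * zchoose (u : ℤ) (t : ℤ) * zchoose ((n - k - i : ℕ) : ℤ) (s : ℤ) *
          zchoose ((i - u : ℕ) : ℤ) ((j : ℤ) - u - s)) * e1 +
        (isign ((u : ℤ) - t) * zchoose (u : ℤ) (t : ℤ) * zchoose ((n - k - i : ℕ) : ℤ) (s : ℤ) *
          zchoose ((n - 2 * k : ℕ) : ℤ) ((i - k : ℕ) : ℤ)) * e2
  rw [Finset.sum_congr rfl claim, Finset.sum_comm, Finset.mul_sum]
  apply Finset.sum_congr rfl
  intro s hs
  simp only [Finset.mem_range] at hs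
  rw [show (j : ℤ) - k - s = ((j - k - s : ℕ) : ℤ) from by omega]
  rw [← Finset.mul_sum, zch_inner_sum n k t (j - k - s) (by omega)]
  rw [show isign ((j : ℤ) - t - s) = isign (((j - k - s : ℕ) : ℤ) + k - t) from
    congrArg isign (by omega)]
  rw [zchoose_symm k ((j : ℤ) - t - s),
    show (k : ℤ) - ((j : ℤ) - t - s) = (t : ℤ) - ((j - k - s : ℕ) : ℤ) from by omega]
  ring
end
end

section
/- Let q ≥ 3 be an integer and let ℬ ⊆ ℂ^{q×q} (rows and columns indexed by {0, 1, …, q−1}) be the set of matrices M with M_{π(a),π(b)} = M_{a,b} for every permutation π of {0,…,q−1} fixing 0 and all a, b. Then ℬ is a subalgebra of ℂ^{q×q} of dimension 5, with basis B_1,…,B_5 determined by: (Σ_i x_i B_i)_{0,0} = x_1, (Σ_i x_i B_i)_{0,b} = x_2 for b ≠ 0, (Σ_i x_i B_i)_{a,0} = x_3 for a ≠ 0, (Σ_i x_i B_i)_{a,a} = x_4 for a ≠ 0, and (Σ_i x_i B_i)_{a,b} = x_5 for distinct nonzero a, b. Moreover, the linear map φ : ℬ → M_2(ℂ) ⊕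 M_1(ℂ) given by φ(x_1B_1 + ⋯ + x_5B_5) := [[x_1, x_2√(q−1)], [x_3√(q−1), x_4 + (q−2)x_5]] ⊕ [x_4 − x_5] is a bijective ℂ-algebra homomorphism satisfying φ(M*) = φ(M)*, where * denotes the conjugate transpose. -/
open scoped Classical
open Matrix

noncomputable section

/-- The five 0/1 matrices `B_1, …, B_5` (indexed here by `Fin 5`) whose linear
combinations `Σ x_i B_i` are exactly the matrices of the displayed pattern:
entry `(0,0)` is `x_1`; entries `(0,b)`, `b ≠ 0`, are `x_2`; entries `(a,0)`, `a ≠ 0`,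
are `x_3`; diagonal entries `(a,a)`, `a ≠ 0`, are `x_4`; and off-diagonal entries
`(a,b)` with `a, b ≠ 0` are `x_5`. -/
def Bq (q : ℕ) (hq : 0 < q) : Fin 5 → Matrix (Fin q) (Fin q) ℂ
  | 0 => Matrix.of fun a b => if a = ⟨0, hq⟩ ∧ b = ⟨0, hq⟩ then 1 else 0
  | 1 => Matrix.of fun a b => if a = ⟨0, hq⟩ ∧ b ≠ ⟨0, hq⟩ then 1 else 0
  | 2 => Matrix.of fun a b => if a ≠ ⟨0, hq⟩ ∧ b = ⟨0, hq⟩ then 1 else 0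
  | 3 => Matrix.of fun a b => if a ≠ ⟨0, hq⟩ ∧ a = b then 1 else 0
  | 4 => Matrix.of fun a b => if a ≠ ⟨0, hq⟩ ∧ b ≠ ⟨0, hq⟩ ∧ a ≠ b then 1 else 0

namespace Stmt17aux
variable (q : ℕ)

lemma pos0 {q : ℕ} (hq : 3 ≤ q) : 0 < q := by omega

/-- The generic "pattern" matrix with entries `x 0, …, x 4` in the five orbits. -/
def Pm (hq : 3 ≤ q) (x : Fin 5 → ℂ) : Matrix (Fin q) (Fin q) ℂ :=
  Matrix.of fun a b =>
    if a = (⟨0, pos0 hq⟩ : Fin q) then (if b = (⟨0, pos0 hq⟩ : Fin q) then x 0 else x 1)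
    else if b = (⟨0, pos0 hq⟩ : Fin q) then x 2
    else if a = b then x 3 else x 4

/-- The five coordinates of a matrix. -/
def cm (hq : 3 ≤ q) (M : Matrix (Fin q) (Fin q) ℂ) : Fin 5 → ℂ :=
  ![M ⟨0, pos0 hq⟩ ⟨0, pos0 hq⟩, M ⟨0, pos0 hq⟩ ⟨1, by omega⟩,
    M ⟨1, by omega⟩ ⟨0, pos0 hq⟩, M ⟨1, by omega⟩ ⟨1, by omega⟩,
    M ⟨1, by omega⟩ ⟨2, by omega⟩]

/-- Coordinates of the product of two pattern matrices. -/
def mulxc (c : ℂ) (x y : Fin 5 → ℂ) : Fin 5 → ℂ :=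
  ![x 0 * y 0 + (c-1) * (x 1 * y 2),
    x 0 * y 1 + x 1 * y 3 + (c-2) * (x 1 * y 4),
    x 2 * y 0 + x 3 * y 2 + (c-2) * (x 4 * y 2),
    x 2 * y 1 + x 3 * y 3 + (c-2) * (x 4 * y 4),
    x 2 * y 1 + x 3 * y 4 + x 4 * y 3 + (c-3) * (x 4 * y 4)]

lemma sum1 (p : Fin q) (A D : ℂ) :
    ∑ k : Fin q, (if k = p then A else D) = A + ((q:ℂ) - 1) * D := by
  have key : ∀ k : Fin q, (if k = p then A else D) = (if k = p then A - D else 0) + D := by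
    intro k; split_ifs <;> ring
  simp only [key, Finset.sum_add_distrib, Finset.sum_ite_eq', Finset.mem_univ, if_true,
    Finset.sum_const, Finset.card_univ, Fintype.card_fin, nsmul_eq_mul]
  ring

lemma sum2 (p r : Fin q) (hpr : p ≠ r) (A B D : ℂ) :
    ∑ k : Fin q, (if k = p then A else if k = r then B else D)
      = A + B + ((q:ℂ) - 2) * D := by
  have key : ∀ k : Fin q, (if k = p then A else if k = r then B else D)
      = (if k = p then A - D else 0) + ((if k = r then B - D else 0) + D) := by
    intro k
    split_ifs with h1 h2 <;> simp_all
  simp only [key, Finset.sum_add_distrib, Finset.sum_ite_eq', Finset.mem_univ, if_true,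
    Finset.sum_const, Finset.card_univ, Fintype.card_fin, nsmul_eq_mul]
  ring

lemma sum3 (p r t : Fin q) (hpr : p ≠ r) (hpt : p ≠ t) (hrt : r ≠ t) (A B C D : ℂ) :
    ∑ k : Fin q, (if k = p then A else if k = r then B else if k = t then C else D)
      = A + B + C + ((q:ℂ) - 3) * D := by
  have key : ∀ k : Fin q, (if k = p then A else if k = r then B else if k = t then C else D)
      = (if k = p then A - D else 0) + ((if k = r then B - D else 0)
          + ((if k = t then C - D else 0) + D)) := by
    intro k
    split_ifs <;> simp_all
  simp only [key, Finset.sum_add_distrib, Finset.sum_ite_eq', Finset.mem_univ, if_true,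
    Finset.sum_const, Finset.card_univ, Fintype.card_fin, nsmul_eq_mul]
  ring

variable {q} (hq : 3 ≤ q)

lemma z10 : (⟨1, by omega⟩ : Fin q) ≠ ⟨0, pos0 hq⟩ := by simp [Fin.ext_iff]
lemma z20 : (⟨2, by omega⟩ : Fin q) ≠ ⟨0, pos0 hq⟩ := by simp [Fin.ext_iff]
lemma z12 : (⟨1, by omega⟩ : Fin q) ≠ ⟨2, by omega⟩ := by simp [Fin.ext_iff]

lemma sum_eq_Pm (x : Fin 5 → ℂ) (h : 0 < q) :
    ∑ i, x i • Bq q h i = Pm q hq x := by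
  ext a b
  simp only [Fin.sum_univ_five, Matrix.sum_apply, Matrix.add_apply, Matrix.smul_apply, Bq, Pm,
    Matrix.of_apply, smul_eq_mul]
  split_ifs <;> simp_all

lemma cm_Pm (x : Fin 5 → ℂ) : cm q hq (Pm q hq x) = x := by
  funext i
  fin_cases i <;>
    simp [cm, Pm, z10 hq, z20 hq, z12 hq, Fin.ext_iff]

lemma cm_add (M N : Matrix (Fin q) (Fin q) ℂ) :
    cm q hq (M + N) = cm q hq M + cm q hq N := by
  funext i
  fin_cases i <;> simp [cm]

lemma cm_smul (a : ℂ) (M : Matrix (Fin q) (Fin q) ℂ) :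
    cm q hq (a • M) = a • cm q hq M := by
  funext i
  fin_cases i <;> simp [cm]

lemma cm_one : cm q hq (1 : Matrix (Fin q) (Fin q) ℂ) = ![1, 0, 0, 1, 0] := by
  funext i
  fin_cases i <;>
    simp [cm, Matrix.one_apply, z10 hq, z20 hq, z12 hq, Fin.ext_iff]

lemma Pm_mem (x : Fin 5 → ℂ) :
    ∀ π : Equiv.Perm (Fin q), π ⟨0, pos0 hq⟩ = ⟨0, pos0 hq⟩ →
      ∀ a b, Pm q hq x (π a) (π b) = Pm q hq x a b := by
  intro π hπ a b
  have h0 : ∀ c : Fin q, π c = ⟨0, pos0 hq⟩ ↔ c = ⟨0, pos0 hq⟩ := by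
    intro c
    constructor
    · intro h; exact π.injective (h.trans hπ.symm)
    · intro h; rw [h, hπ]
  have h1 : π a = π b ↔ a = b := π.injective.eq_iff
  simp only [Pm, Matrix.of_apply, h0, h1]

lemma exists_perm (a b : Fin q) (ha : a ≠ ⟨0, pos0 hq⟩) (hb : b ≠ ⟨0, pos0 hq⟩)
    (hab : a ≠ b) :
    ∃ π : Equiv.Perm (Fin q), π ⟨0, pos0 hq⟩ = ⟨0, pos0 hq⟩ ∧
      π ⟨1, by omega⟩ = a ∧ π ⟨2, by omega⟩ = b := by
  set σ := Equiv.swap (⟨1, by omega⟩ : Fin q) a with hσ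
  have hσ1 : σ ⟨1, by omega⟩ = a := Equiv.swap_apply_left _ _
  have hσ0 : σ ⟨0, pos0 hq⟩ = ⟨0, pos0 hq⟩ :=
    Equiv.swap_apply_of_ne_of_ne (Ne.symm (z10 hq)) (Ne.symm ha)
  have h2a : σ ⟨2, by omega⟩ ≠ a := fun h => z12 hq (σ.injective (h.trans hσ1.symm)).symm
  have h20 : σ ⟨2, by omega⟩ ≠ ⟨0, pos0 hq⟩ := fun h => z20 hq (σ.injective (h.trans hσ0.symm))
  refine ⟨σ.trans (Equiv.swap (σ ⟨2, by omega⟩) b), ?_, ?_, ?_⟩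
  · simp only [Equiv.trans_apply, hσ0]
    exact Equiv.swap_apply_of_ne_of_ne (Ne.symm h20) (Ne.symm hb)
  · simp only [Equiv.trans_apply, hσ1]
    exact Equiv.swap_apply_of_ne_of_ne (Ne.symm h2a) hab
  · simp only [Equiv.trans_apply]
    exact Equiv.swap_apply_left _ _

lemma inv_eq_Pm (M : Matrix (Fin q) (Fin q) ℂ)
    (hM : ∀ π : Equiv.Perm (Fin q), π ⟨0, pos0 hq⟩ = ⟨0, pos0 hq⟩ →
      ∀ a b, M (π a) (π b) = M a b) :
    M = Pm q hq (cm q hq M) := by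
  ext a b
  simp only [Pm, cm, Matrix.of_apply]
  by_cases ha : a = (⟨0, pos0 hq⟩ : Fin q) <;> by_cases hb : b = (⟨0, pos0 hq⟩ : Fin q)
  · simp [ha, hb]
  · simp only [ha, hb, if_true, if_false]
    have hswap := hM (Equiv.swap b ⟨1, by omega⟩)
      (Equiv.swap_apply_of_ne_of_ne (Ne.symm hb) (Ne.symm (z10 hq))) ⟨0, pos0 hq⟩ ⟨1, by omega⟩
    rw [Equiv.swap_apply_of_ne_of_ne (Ne.symm hb) (Ne.symm (z10 hq)),
      Equiv.swap_apply_right] at hswap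
    rw [hswap]
    all_goals simp
  · simp only [ha, hb, if_true, if_false]
    have hswap := hM (Equiv.swap a ⟨1, by omega⟩)
      (Equiv.swap_apply_of_ne_of_ne (Ne.symm ha) (Ne.symm (z10 hq))) ⟨1, by omega⟩ ⟨0, pos0 hq⟩
    rw [Equiv.swap_apply_of_ne_of_ne (Ne.symm ha) (Ne.symm (z10 hq)),
      Equiv.swap_apply_right] at hswap
    rw [hswap]
    all_goals simp
  · by_cases hab : a = b
    · simp only [ha, hb, hab, if_false, if_true]
      have hswap := hM (Equiv.swap b ⟨1, by omega⟩)
        (Equiv.swap_apply_of_ne_of_ne (Ne.symm hb) (Ne.symm (z10 hq))) ⟨1, by omega⟩ ⟨1, by omega⟩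
      rw [Equiv.swap_apply_right] at hswap
      rw [hswap]
      all_goals simp
    · simp only [ha, hb, hab, if_false]
      obtain ⟨π, hπ0, hπ1, hπ2⟩ := exists_perm hq a b ha hb hab
      have hswap := hM π hπ0 ⟨1, by omega⟩ ⟨2, by omega⟩
      rw [hπ1, hπ2] at hswap
      rw [hswap]
      all_goals simp

lemma cm_mul (x y : Fin 5 → ℂ) :
    cm q hq (Pm q hq x * Pm q hq y) = mulxc (q:ℂ) x y := by
  have e00 : (Pm q hq x * Pm q hq y) ⟨0, pos0 hq⟩ ⟨0, pos0 hq⟩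
      = x 0 * y 0 + ((q:ℂ)-1) * (x 1 * y 2) := by
    rw [Matrix.mul_apply]
    have : ∀ k : Fin q, Pm q hq x ⟨0, pos0 hq⟩ k * Pm q hq y k ⟨0, pos0 hq⟩
        = (if k = (⟨0, pos0 hq⟩ : Fin q) then x 0 * y 0 else x 1 * y 2) := by
      intro k
      by_cases h0 : k = (⟨0, pos0 hq⟩ : Fin q)
      · subst h0; simp [Pm, Fin.ext_iff]
      · simp [Pm, h0]
    rw [Finset.sum_congr rfl fun k _ => this k, sum1]
  have e01 : (Pm q hq x * Pm q hq y) ⟨0, pos0 hq⟩ ⟨1, by omega⟩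
      = x 0 * y 1 + x 1 * y 3 + ((q:ℂ)-2) * (x 1 * y 4) := by
    rw [Matrix.mul_apply]
    have : ∀ k : Fin q, Pm q hq x ⟨0, pos0 hq⟩ k * Pm q hq y k ⟨1, by omega⟩
        = (if k = (⟨0, pos0 hq⟩ : Fin q) then x 0 * y 1
           else if k = (⟨1, by omega⟩ : Fin q) then x 1 * y 3 else x 1 * y 4) := by
      intro k
      by_cases h0 : k = (⟨0, pos0 hq⟩ : Fin q)
      · subst h0; simp [Pm, Fin.ext_iff]
      · by_cases h1 : k = (⟨1, by omega⟩ : Fin q)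
        · subst h1; simp [Pm, Fin.ext_iff]
        · simp [Pm, h0, h1, Ne.symm h1]
    rw [Finset.sum_congr rfl fun k _ => this k, sum2 q _ _ (Ne.symm (z10 hq))]
  have e10 : (Pm q hq x * Pm q hq y) ⟨1, by omega⟩ ⟨0, pos0 hq⟩
      = x 2 * y 0 + x 3 * y 2 + ((q:ℂ)-2) * (x 4 * y 2) := by
    rw [Matrix.mul_apply]
    have : ∀ k : Fin q, Pm q hq x ⟨1, by omega⟩ k * Pm q hq y k ⟨0, pos0 hq⟩
        = (if k = (⟨0, pos0 hq⟩ : Fin q) then x 2 * y 0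
           else if k = (⟨1, by omega⟩ : Fin q) then x 3 * y 2 else x 4 * y 2) := by
      intro k
      by_cases h0 : k = (⟨0, pos0 hq⟩ : Fin q)
      · subst h0; simp [Pm, Fin.ext_iff]
      · by_cases h1 : k = (⟨1, by omega⟩ : Fin q)
        · subst h1; simp [Pm, Fin.ext_iff]
        · simp [Pm, h0, h1, Ne.symm h1]
    rw [Finset.sum_congr rfl fun k _ => this k, sum2 q _ _ (Ne.symm (z10 hq))]
  have e11 : (Pm q hq x * Pm q hq y) ⟨1, by omega⟩ ⟨1, by omega⟩
      = x 2 * y 1 + x 3 * y 3 + ((q:ℂ)-2) * (x 4 * y 4) := by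
    rw [Matrix.mul_apply]
    have : ∀ k : Fin q, Pm q hq x ⟨1, by omega⟩ k * Pm q hq y k ⟨1, by omega⟩
        = (if k = (⟨0, pos0 hq⟩ : Fin q) then x 2 * y 1
           else if k = (⟨1, by omega⟩ : Fin q) then x 3 * y 3 else x 4 * y 4) := by
      intro k
      by_cases h0 : k = (⟨0, pos0 hq⟩ : Fin q)
      · subst h0; simp [Pm, Fin.ext_iff]
      · by_cases h1 : k = (⟨1, by omega⟩ : Fin q)
        · subst h1; simp [Pm, Fin.ext_iff]
        · simp [Pm, h0, h1, Ne.symm h1]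
    rw [Finset.sum_congr rfl fun k _ => this k, sum2 q _ _ (Ne.symm (z10 hq))]
  have e12 : (Pm q hq x * Pm q hq y) ⟨1, by omega⟩ ⟨2, by omega⟩
      = x 2 * y 1 + x 3 * y 4 + x 4 * y 3 + ((q:ℂ)-3) * (x 4 * y 4) := by
    rw [Matrix.mul_apply]
    have : ∀ k : Fin q, Pm q hq x ⟨1, by omega⟩ k * Pm q hq y k ⟨2, by omega⟩
        = (if k = (⟨0, pos0 hq⟩ : Fin q) then x 2 * y 1
           else if k = (⟨1, by omega⟩ : Fin q) then x 3 * y 4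
           else if k = (⟨2, by omega⟩ : Fin q) then x 4 * y 3 else x 4 * y 4) := by
      intro k
      by_cases h0 : k = (⟨0, pos0 hq⟩ : Fin q)
      · subst h0; simp [Pm, Fin.ext_iff]
      · by_cases h1 : k = (⟨1, by omega⟩ : Fin q)
        · subst h1; simp [Pm, Fin.ext_iff]
        · by_cases h2 : k = (⟨2, by omega⟩ : Fin q)
          · subst h2; simp [Pm, Fin.ext_iff]
          · simp [Pm, h0, h1, h2, Ne.symm h1]
    rw [Finset.sum_congr rfl fun k _ => this k,
      sum3 q _ _ _ (Ne.symm (z10 hq)) (Ne.symm (z20 hq)) (z12 hq)]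
  funext i
  fin_cases i <;> simp [cm, mulxc, e00, e01, e10, e11, e12]

lemma cm_conjT (x : Fin 5 → ℂ) :
    cm q hq (Pm q hq x)ᴴ =
      ![(starRingEnd ℂ) (x 0), (starRingEnd ℂ) (x 2), (starRingEnd ℂ) (x 1),
        (starRingEnd ℂ) (x 3), (starRingEnd ℂ) (x 4)] := by
  funext i
  fin_cases i <;>
    simp [cm, Pm, Matrix.conjTranspose_apply, z10 hq, z20 hq, z12 hq, Ne.symm (z12 hq),
      Fin.ext_iff]

end Stmt17aux

namespace Stmt17aux
open Stmt17aux

def psi (c s : ℂ) (x : Fin 5 → ℂ) :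
    Matrix (Fin 2) (Fin 2) ℂ × Matrix (Fin 1) (Fin 1) ℂ :=
  (!![x 0, x 1 * s; x 2 * s, x 3 + (c - 2) * x 4], !![x 3 - x 4])

lemma psi_add (c s : ℂ) (x y : Fin 5 → ℂ) : psi c s (x + y) = psi c s x + psi c s y := by
  simp only [psi, Prod.mk_add_mk]
  refine Prod.ext ?_ ?_ <;> ext i j <;> fin_cases i <;> fin_cases j <;> simp [Pi.add_apply] <;> ring

lemma psi_smul (c s : ℂ) (a : ℂ) (x : Fin 5 → ℂ) : psi c s (a • x) = a • psi c s x := by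
  simp only [psi, Prod.smul_mk]
  refine Prod.ext ?_ ?_ <;> ext i j <;> fin_cases i <;> fin_cases j <;> simp <;> ring

lemma psi_one (c s : ℂ) : psi c s ![1, 0, 0, 1, 0] = 1 := by
  simp only [psi]
  refine Prod.ext ?_ ?_ <;> ext i j <;> fin_cases i <;> fin_cases j <;> simp [Matrix.one_apply]

lemma psi_mul (c s : ℂ) (hs : s * s = c - 1) (x y : Fin 5 → ℂ) :
    psi c s (mulxc c x y) = ((psi c s x).1 * (psi c s y).1, (psi c s x).2 * (psi c s y).2) := by
  simp only [psi, mulxc]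
  refine Prod.ext ?_ ?_
  · ext i j
    fin_cases i <;> fin_cases j <;> simp [Matrix.mul_apply, Fin.sum_univ_two]
    · linear_combination (-(x 1 * y 2)) * hs
    · ring
    · ring
    · linear_combination (-(x 2 * y 1)) * hs
  · ext i j
    fin_cases i <;> fin_cases j <;> simp [Matrix.mul_apply, Fin.sum_univ_one]
    ring

lemma psi_star (c s : ℂ) (hcs : (starRingEnd ℂ) s = s) (hcc : (starRingEnd ℂ) c = c)
    (x : Fin 5 → ℂ) :
    psi c s ![(starRingEnd ℂ) (x 0), (starRingEnd ℂ) (x 2), (starRingEnd ℂ) (x 1),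
        (starRingEnd ℂ) (x 3), (starRingEnd ℂ) (x 4)]
      = ((psi c s x).1ᴴ, (psi c s x).2ᴴ) := by
  simp only [psi]
  refine Prod.ext ?_ ?_
  · ext i j
    fin_cases i <;> fin_cases j <;>
      simp [Matrix.conjTranspose_apply, map_add, map_sub, _root_.map_mul, hcs, hcc]
  · ext i j
    fin_cases i <;> fin_cases j <;> simp [Matrix.conjTranspose_apply, map_sub]

lemma psi_inj (c s : ℂ) (hs : s ≠ 0) (hc : c - 1 ≠ 0) {x y : Fin 5 → ℂ}
    (h : psi c s x = psi c s y) : x = y := by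
  have h1 := congrArg Prod.fst h
  have h2 := congrArg Prod.snd h
  simp only [psi] at h1 h2
  have e00 := congrFun (congrFun h1 0) 0
  have e01 := congrFun (congrFun h1 0) 1
  have e10 := congrFun (congrFun h1 1) 0
  have e11 := congrFun (congrFun h1 1) 1
  have f00 := congrFun (congrFun h2 0) 0
  simp at e00 e01 e10 e11 f00
  have c1 : x 1 = y 1 := by
    rcases e01 with h | h
    · exact h
    · exact absurd h hs
  have c2 : x 2 = y 2 := by
    rcases e10 with h | h
    · exact h
    · exact absurd h hs
  have c4 : x 4 = y 4 := by
    apply mul_left_cancel₀ hc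
    linear_combination e11 - f00
  have c3 : x 3 = y 3 := by linear_combination f00 + c4
  funext i
  fin_cases i <;> assumption

lemma psi_surj (c s : ℂ) (hs : s ≠ 0) (hc : c - 1 ≠ 0)
    (p : Matrix (Fin 2) (Fin 2) ℂ × Matrix (Fin 1) (Fin 1) ℂ) :
    psi c s ![p.1 0 0, p.1 0 1 / s, p.1 1 0 / s,
      p.2 0 0 + (p.1 1 1 - p.2 0 0) / (c - 1),
      (p.1 1 1 - p.2 0 0) / (c - 1)] = p := by
  simp only [psi]
  refine Prod.ext ?_ ?_
  · show !![_, _; _, _] = p.1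
    rw [Matrix.eta_fin_two p.1]
    ext i j
    fin_cases i <;> fin_cases j <;> simp
    · exact div_mul_cancel₀ _ hs
    · exact div_mul_cancel₀ _ hs
    · field_simp
      ring
  · show !![_] = p.2
    ext i j
    fin_cases i <;> fin_cases j
    simp


/-- The subalgebra of invariant matrices. -/
def BB {q : ℕ} (hq : 3 ≤ q) : Subalgebra ℂ (Matrix (Fin q) (Fin q) ℂ) where
  carrier := {M | ∀ π : Equiv.Perm (Fin q), π ⟨0, pos0 hq⟩ = ⟨0, pos0 hq⟩ →
    ∀ a b, M (π a) (π b) = M a b}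
  mul_mem' := by
    intro M N hM hN π hπ a b
    rw [Matrix.mul_apply, Matrix.mul_apply,
      ← Equiv.sum_comp π (fun k => M (π a) k * N k (π b))]
    exact Finset.sum_congr rfl fun k _ => by rw [hM π hπ a k, hN π hπ k b]
  one_mem' := by
    intro π hπ a b
    simp [Matrix.one_apply, π.injective.eq_iff]
  add_mem' := by
    intro M N hM hN π hπ a b
    simp [Matrix.add_apply, hM π hπ a b, hN π hπ a b]
  zero_mem' := by intro π hπ a b; simp
  algebraMap_mem' := by
    intro r π hπ a b
    simp [Matrix.algebraMap_matrix_apply, π.injective.eq_iff]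

/-- The coordinate linear equivalence. -/
def E {q : ℕ} (hq : 3 ≤ q) : BB hq ≃ₗ[ℂ] (Fin 5 → ℂ) where
  toFun := fun M => cm q hq (M : Matrix (Fin q) (Fin q) ℂ)
  map_add' := by
    intro M N
    funext i
    fin_cases i <;> simp [cm]
  map_smul' := by
    intro c M
    funext i
    fin_cases i <;> simp [cm]
  invFun := fun x => ⟨Pm q hq x, Pm_mem hq x⟩
  left_inv := fun M => Subtype.ext (inv_eq_Pm hq _ M.2).symm
  right_inv := cm_Pm hq

lemma Bq_eq_Pm {q : ℕ} (hq : 3 ≤ q) (h : 0 < q) (i : Fin 5) :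
    Bq q h i = Pm q hq (Pi.single i 1) := by
  rw [← sum_eq_Pm hq _ h]
  simp [Pi.single_apply, ite_smul]

end Stmt17aux

open Stmt17aux in
/-- for `q ≥ 3`, the set `ℬ` of matrices invariant under all simultaneous
row/column permutations fixing `0` is a subalgebra of `ℂ^{q×q}` of dimension `5` with
basis `B_1, …, B_5`, and `φ(x_1B_1 + ⋯ + x_5B_5) = [[x_1, x_2√(q-1)], [x_3√(q-1),
x_4+(q-2)x_5]] ⊕ [x_4 - x_5]` is a bijective ℂ-algebra `∗`-homomorphism
`ℬ → M_2(ℂ) ⊕ M_1(ℂ)`. -/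
theorem stmt_17 (q : ℕ) (hq : 3 ≤ q) :
    ∃ BB : Subalgebra ℂ (Matrix (Fin q) (Fin q) ℂ),
      (BB : Set (Matrix (Fin q) (Fin q) ℂ)) =
        {M | ∀ π : Equiv.Perm (Fin q), π ⟨0, by omega⟩ = ⟨0, by omega⟩ →
          ∀ a b, M (π a) (π b) = M a b} ∧
      Module.finrank ℂ BB = 5 ∧
      (∃ bas : Module.Basis (Fin 5) ℂ BB,
        ∀ i, (bas i : Matrix (Fin q) (Fin q) ℂ) = Bq q (by omega) i) ∧
      ∃ φ : Matrix (Fin q) (Fin q) ℂ → Matrix (Fin 2) (Fin 2) ℂ × Matrix (Fin 1) (Fin 1) ℂ,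
        IsLinearMap ℂ φ ∧
        (∀ x : Fin 5 → ℂ,
          φ (∑ i, x i • Bq q (by omega) i) =
            (!![x 0, x 1 * ((Real.sqrt ((q : ℝ) - 1) : ℝ) : ℂ);
                x 2 * ((Real.sqrt ((q : ℝ) - 1) : ℝ) : ℂ), x 3 + ((q : ℂ) - 2) * x 4],
             !![x 3 - x 4])) ∧
        Set.BijOn φ (BB : Set (Matrix (Fin q) (Fin q) ℂ)) Set.univ ∧
        φ 1 = 1 ∧
        (∀ M N, M ∈ BB → N ∈ BB → φ (M * N) = ((φ M).1 * (φ N).1, (φ M).2 * (φ N).2)) ∧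
        (∀ M ∈ BB, φ Mᴴ = ((φ M).1ᴴ, (φ M).2ᴴ)) := by
  have hq0 : 0 < q := by omega
  set s : ℂ := ((Real.sqrt ((q : ℝ) - 1) : ℝ) : ℂ) with hs_def
  have hq1R : (0:ℝ) < (q:ℝ) - 1 := by
    have : (3:ℝ) ≤ (q:ℝ) := by exact_mod_cast hq
    linarith
  have hs_ne : s ≠ 0 := by
    rw [hs_def]
    exact_mod_cast (Real.sqrt_ne_zero'.mpr hq1R)
  have hs_sq : s * s = (q:ℂ) - 1 := by
    rw [hs_def, ← Complex.ofReal_mul, Real.mul_self_sqrt hq1R.le]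
    push_cast
    ring
  have hq1 : ((q:ℂ) - 1) ≠ 0 := by
    have h1 : (q:ℂ) ≠ 1 := by
      intro h
      have : q = 1 := by exact_mod_cast h
      omega
    intro h
    exact h1 (by linear_combination h)
  refine ⟨Stmt17aux.BB hq, rfl, ?_, ?_, ?_⟩
  · rw [LinearEquiv.finrank_eq (Stmt17aux.E hq), Module.finrank_fin_fun]
  · refine ⟨Module.Basis.ofEquivFun (Stmt17aux.E hq), ?_⟩
    intro i
    have h1 : (Module.Basis.ofEquivFun (Stmt17aux.E hq)) i = (Stmt17aux.E hq).symm (Pi.single i 1) := by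
      rw [Module.Basis.coe_ofEquivFun]
    rw [h1]
    have h2 : ((Stmt17aux.E hq).symm (Pi.single i 1) : Matrix (Fin q) (Fin q) ℂ)
        = Pm q hq (Pi.single i 1) := rfl
    rw [h2, ← Bq_eq_Pm hq hq0 i]
  · refine ⟨fun M => psi (q:ℂ) s (cm q hq M), ?_, ?_, ?_, ?_, ?_, ?_⟩
    · constructor
      · intro M N
        show psi (q:ℂ) s (cm q hq (M + N)) = _
        rw [cm_add hq, psi_add]
      · intro a M
        show psi (q:ℂ) s (cm q hq (a • M)) = _
        rw [cm_smul hq, psi_smul]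
    · intro x
      show psi (q:ℂ) s (cm q hq (∑ i, x i • Bq q (by omega) i)) = _
      rw [sum_eq_Pm hq x hq0, cm_Pm hq x]
      rfl
    · refine ⟨fun M _ => trivial, ?_, ?_⟩
      · intro M hM N hN h
        have hc : cm q hq M = cm q hq N := psi_inj (q:ℂ) s hs_ne hq1 h
        rw [inv_eq_Pm hq M hM, inv_eq_Pm hq N hN, hc]
      · intro p _
        refine ⟨Pm q hq (![p.1 0 0, p.1 0 1 / s, p.1 1 0 / s,
          p.2 0 0 + (p.1 1 1 - p.2 0 0) / ((q:ℂ) - 1),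
          (p.1 1 1 - p.2 0 0) / ((q:ℂ) - 1)]), Pm_mem hq _, ?_⟩
        show psi (q:ℂ) s (cm q hq (Pm q hq _)) = p
        rw [cm_Pm hq]
        exact psi_surj (q:ℂ) s hs_ne hq1 p
    · show psi (q:ℂ) s (cm q hq 1) = 1
      rw [cm_one hq]
      exact psi_one (q:ℂ) s
    · intro M N hM hN
      rw [inv_eq_Pm hq M hM, inv_eq_Pm hq N hN]
      show psi (q:ℂ) s (cm q hq (Pm q hq (cm q hq M) * Pm q hq (cm q hq N))) = _
      rw [cm_mul hq]
      simp only [cm_Pm hq]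
      exact psi_mul (q:ℂ) s hs_sq _ _
    · intro M hM
      rw [inv_eq_Pm hq M hM]
      show psi (q:ℂ) s (cm q hq (Pm q hq (cm q hq M))ᴴ) = _
      rw [cm_conjT hq]
      simp only [cm_Pm hq]
      exact psi_star (q:ℂ) s (Complex.conj_ofReal _) (by simp) _
end
end
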